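/- arXiv:1611.07793 — 4 statements merged into one kernel-verified Lean document; each statement's English description precedes it below -/
import Mathlib

section
/- For every n ≥ 1 and every 0 ≤ k ≤ n−1, the number of treeshelves of size n having exactly k left children equals the Eulerian number A(n,k), i.e. the number of permutations σ of {1,…,n} having exactly k descents (indices 1 ≤ i ≤ n−1 with σ(i) > σ(i+1)). -/
/-- Binary trees with natural-number labels, where each child slot (left/right)
is explicit; `leaf` denotes the absence of a subtree.  A *treeshelf* will be such
a tree whose labels are exactly `{1, …, n}` and increase away from the root. -/
inductive TShelf : Type where
  | leaf : TShelf
  | node : ℕ → TShelf → TShelf → TShelf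

namespace TShelf

/-- Whether the tree is nonempty (i.e. an actual node). -/
def isNode : TShelf → Bool
  | leaf => false
  | node _ _ _ => true

/-- The label of the root (junk value `0` for the empty tree). -/
def rootLabel : TShelf → ℕ
  | leaf => 0
  | node a _ _ => a

/-- The left subtree. -/
def left : TShelf → TShelf
  | leaf => leaf
  | node _ l _ => l

/-- The right subtree. -/
def right : TShelf → TShelf
  | leaf => leaf
  | node _ _ r => r

/-- The multiset of labels occurring in the tree. -/
def labels : TShelf → Multiset ℕ
  | leaf => 0
  | node a l r => a ::ₘ (l.labels + r.labels)

/-- Every child's label is greater than its parent's label. -/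
def increasing : TShelf → Bool
  | leaf => true
  | node a l r =>
      (!l.isNode || decide (a < l.rootLabel)) &&
      (!r.isNode || decide (a < r.rootLabel)) &&
      l.increasing && r.increasing

/-- The number of left children (nodes attached to their parent as a left child). -/
def numLeft : TShelf → ℕ
  | leaf => 0
  | node _ l r => (if l.isNode then 1 else 0) + l.numLeft + r.numLeft

/-- `t` is a treeshelf of size `n`: its nodes are labeled bijectively by
`{1, …, n}` and labels increase from parents to children. -/
def IsShelf (n : ℕ) (t : TShelf) : Prop :=
  t.labels = (Finset.Icc 1 n).val ∧ t.increasing = true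

/-- Avoidance of the pattern "a left child having a right child":
no node is simultaneously the left child of its parent and has a right child. -/
def avoidsLR : TShelf → Bool
  | leaf => true
  | node _ l r => !(l.isNode && l.right.isNode) && l.avoidsLR && r.avoidsLR

/-- Avoidance of the pattern "a left child having a left child":
no node is simultaneously the left child of its parent and has a left child. -/
def avoidsLL : TShelf → Bool
  | leaf => true
  | node _ l r => !(l.isNode && l.left.isNode) && l.avoidsLL && r.avoidsLL

/-- Avoidance of the pattern "left label smaller than right label": no node has
both a left and a right child with the left child's label smaller than the
right child's label. -/
def avoidsLess : TShelf → Bool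
  | leaf => true
  | node _ l r =>
      !(l.isNode && r.isNode && decide (l.rootLabel < r.rootLabel)) &&
      l.avoidsLess && r.avoidsLess

/-- Canonical representation of unordered sibling pairs: whenever a node has two
children, the left one carries the smaller label.  Trees satisfying this are
canonical representatives of trees whose sibling pairs are unordered. -/
def pairCanon : TShelf → Bool
  | leaf => true
  | node _ l r =>
      (!(l.isNode && r.isNode) || decide (l.rootLabel < r.rootLabel)) &&
      l.pairCanon && r.pairCanon

/-- Canonical representation of untagged only children: every only child is a
right child.  Together with `pairCanon`, trees satisfying this are canonical
representatives of unordered binary increasing trees. -/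
def singleRight : TShelf → Bool
  | leaf => true
  | node _ l r => (!l.isNode || r.isNode) && l.singleRight && r.singleRight

end TShelf


/-- number of descents of a list -/
def descents : List ℕ → ℕ
  | [] => 0
  | [_] => 0
  | a :: b :: L => (if b < a then 1 else 0) + descents (b :: L)

lemma descents_cons (a : ℕ) (L : List ℕ) :
    descents (a :: L) = (match L.head? with
      | none => 0 | some b => if b < a then 1 else 0) + descents L := by
  cases L <;> simp [descents]

lemma descents_append : ∀ (xs : List ℕ) (y : ℕ) (ys : List ℕ),
    descents (xs ++ y :: ys) = descents (xs ++ [y]) + descents (y :: ys)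
  | [], y, ys => by simp [descents]
  | [x], y, ys => by simp [descents]
  | x :: x' :: xs, y, ys => by
      have := descents_append (x' :: xs) y ys
      simp only [List.cons_append, List.append_eq, descents] at *
      omega

lemma descents_concat : ∀ (L : List ℕ) (a : ℕ),
    descents (L ++ [a]) = descents L + (match L.getLast? with
      | none => 0 | some b => if a < b then 1 else 0)
  | [], a => by simp [descents]
  | [x], a => by simp [descents]
  | x :: x' :: L, a => by
      have := descents_concat (x' :: L) a
      simp only [List.cons_append, List.append_eq, descents] at *
      rw [List.getLast?_cons_cons]
      omega

namespace TShelf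

/-- inorder traversal -/
def inorder : TShelf → List ℕ
  | leaf => []
  | node a l r => inorder l ++ a :: inorder r

lemma labels_eq_inorder : ∀ t : TShelf, t.labels = ↑t.inorder
  | leaf => rfl
  | node a l r => by
      simp [labels, inorder, labels_eq_inorder l, labels_eq_inorder r]
      exact List.perm_middle.symm

lemma eq_leaf_of_not_isNode : ∀ {t : TShelf}, t.isNode = false → t = leaf
  | leaf, _ => rfl
  | node _ _ _, h => by simp [isNode] at h

lemma root_mem : ∀ {t : TShelf}, t.isNode = true → t.rootLabel ∈ t.labels
  | node a l r, _ => by simp [rootLabel, labels]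

lemma increasing_node {a l r} : (node a l r).increasing = true ↔
    (l.isNode = true → a < l.rootLabel) ∧ (r.isNode = true → a < r.rootLabel) ∧
    l.increasing = true ∧ r.increasing = true := by
  have key : ∀ (x : Bool) (P : Prop), (x = false ∨ P) ↔ (x = true → P) := by
    intro x P; cases x <;> simp
  simp only [increasing, Bool.and_eq_true, Bool.or_eq_true, Bool.not_eq_true',
    decide_eq_true_eq, key]
  tauto

lemma root_min : ∀ {t : TShelf}, t.increasing = true →
    ∀ x ∈ t.labels, t.rootLabel ≤ x
  | leaf, _, x, hx => by simp [labels] at hx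
  | node a l r, h, x, hx => by
      rw [increasing_node] at h
      obtain ⟨hl, hr, hil, hir⟩ := h
      simp only [labels, Multiset.mem_cons, Multiset.mem_add] at hx
      rcases hx with rfl | hx | hx
      · exact le_refl _
      · have hn : l.isNode = true := by
          cases l with
          | leaf => simp [labels] at hx
          | node => rfl
        exact le_of_lt (lt_of_lt_of_le (hl hn) (root_min hil x hx))
      · have hn : r.isNode = true := by
          cases r with
          | leaf => simp [labels] at hx
          | node => rfl
        exact le_of_lt (lt_of_lt_of_le (hr hn) (root_min hir x hx))

lemma lt_of_mem_sub {a : ℕ} {l r s : TShelf} (h : (node a l r).increasing = true)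
    (hs : s = l ∨ s = r) {x : ℕ} (hx : x ∈ s.labels) : a < x := by
  rw [increasing_node] at h
  have hn : s.isNode = true := by
    cases s with
    | leaf => simp [labels] at hx
    | node => rfl
  have h1 : a < s.rootLabel := by
    rcases hs with rfl | rfl
    · exact h.1 hn
    · exact h.2.1 hn
  have h2 : s.increasing = true := by
    rcases hs with rfl | rfl
    · exact h.2.2.1
    · exact h.2.2.2
  exact lt_of_lt_of_le h1 (root_min h2 x hx)

lemma mem_of_getLast?_eq {L : List ℕ} {b : ℕ} (h : L.getLast? = some b) : b ∈ L := by
  obtain ⟨hne, rfl⟩ := List.mem_getLast?_eq_getLast h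
  exact List.getLast_mem hne

lemma mem_of_head?_eq {L : List ℕ} {b : ℕ} (h : L.head? = some b) : b ∈ L := by
  cases L with
  | nil => simp at h
  | cons x xs => simp at h; subst h; exact List.mem_cons_self

lemma mem_labels_of_mem_inorder {t : TShelf} {x : ℕ} (h : x ∈ t.inorder) :
    x ∈ t.labels := by rw [labels_eq_inorder]; exact_mod_cast h

lemma descents_inorder : ∀ {t : TShelf}, t.increasing = true →
    descents t.inorder = t.numLeft
  | leaf, _ => rfl
  | node a l r, h => by
      have hl := (increasing_node.mp h).2.2.1
      have hr := (increasing_node.mp h).2.2.2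
      have ihl := descents_inorder hl
      have ihr := descents_inorder hr
      show descents (l.inorder ++ a :: r.inorder) = _
      rw [descents_append, descents_concat, descents_cons]
      have h1 : (match l.inorder.getLast? with
          | none => 0 | some b => if a < b then 1 else 0) =
          (if l.isNode then 1 else 0) := by
        cases hg : l.inorder.getLast? with
        | none =>
          rw [List.getLast?_eq_none_iff] at hg
          have : l = leaf := by
            cases l with
            | leaf => rfl
            | node b u v => simp [inorder] at hg
          subst this; rfl
        | some b =>
          have hb : b ∈ l.inorder := mem_of_getLast?_eq hg
          have hab : a < b := lt_of_mem_sub h (Or.inl rfl) (mem_labels_of_mem_inorder hb)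
          have hn : l.isNode = true := by
            cases l with
            | leaf => simp [inorder] at hb
            | node => rfl
          simp [hn, hab]
      have h2 : (match r.inorder.head? with
          | none => 0 | some b => if b < a then 1 else 0) = 0 := by
        cases hg : r.inorder.head? with
        | none => rfl
        | some b =>
          have hb : b ∈ r.inorder := mem_of_head?_eq hg
          have hab : a < b := lt_of_mem_sub h (Or.inr rfl) (mem_labels_of_mem_inorder hb)
          simp only [ite_eq_right_iff]
          intro hba; omega
      rw [h1, h2, ihl, ihr]
      show _ = (if l.isNode then 1 else 0) + l.numLeft + r.numLeft
      omega

end TShelf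

lemma split_unique {a : ℕ} : ∀ (L1 L1' L2 L2' : List ℕ), a ∉ L1 → a ∉ L1' →
    L1 ++ a :: L2 = L1' ++ a :: L2' → L1 = L1' ∧ L2 = L2'
  | [], [], L2, L2', _, _, h => by simpa using h
  | [], x' :: L1', L2, L2', h1, h1', h => by
      simp only [List.nil_append, List.cons_append, List.cons.injEq] at h
      exact absurd (by rw [h.1]; exact List.mem_cons_self) h1'
  | x :: L1, [], L2, L2', h1, h1', h => by
      simp only [List.nil_append, List.cons_append, List.cons.injEq] at h
      exact absurd (by rw [h.1]; exact List.mem_cons_self) h1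
  | x :: L1, x' :: L1', L2, L2', h1, h1', h => by
      simp only [List.cons_append, List.cons.injEq] at h
      obtain ⟨rfl, h2⟩ := h
      obtain ⟨h3, h4⟩ := split_unique L1 L1' L2 L2'
        (fun hm => h1 (List.mem_cons_of_mem _ hm))
        (fun hm => h1' (List.mem_cons_of_mem _ hm)) h2
      exact ⟨by rw [h3], h4⟩

namespace TShelf

lemma inorder_inj : ∀ (t1 t2 : TShelf), t1.increasing = true → t2.increasing = true →
    t1.inorder.Nodup → t1.inorder = t2.inorder → t1 = t2
  | leaf, leaf, _, _, _, _ => rfl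
  | leaf, node a' l' r', _, _, _, h => by
      simp [inorder] at h
  | node a l r, leaf, _, _, _, h => by
      simp [inorder] at h
  | node a l r, node a' l' r', h1, h2, hnd, h => by
      simp only [inorder] at h hnd
      -- a = a' since both are ≤ all elements of the same list
      have hmem : a ∈ l'.inorder ++ a' :: r'.inorder := by
        rw [← h]; exact List.mem_append_right _ (List.mem_cons_self)
      have hmem' : a' ∈ l.inorder ++ a :: r.inorder := by
        rw [h]; exact List.mem_append_right _ (List.mem_cons_self)
      have haa : a = a' := by
        have h1' : a ≤ a' := by
          have := root_min h1 a' (by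
            rw [labels_eq_inorder]; exact_mod_cast hmem')
          simpa [rootLabel] using this
        have h2' : a' ≤ a := by
          have := root_min h2 a (by
            rw [labels_eq_inorder]; exact_mod_cast hmem)
          simpa [rootLabel] using this
        omega
      subst haa
      have hanl : a ∉ l.inorder := by
        intro hm
        have := lt_of_mem_sub h1 (Or.inl rfl) (mem_labels_of_mem_inorder hm)
        omega
      have hanl' : a ∉ l'.inorder := by
        intro hm
        have := lt_of_mem_sub h2 (Or.inl rfl) (mem_labels_of_mem_inorder hm)
        omega
      obtain ⟨hL, hR⟩ := split_unique _ _ _ _ hanl hanl' h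
      have hndl : l.inorder.Nodup := ((List.nodup_append.mp hnd).1)
      have hndr : r.inorder.Nodup := ((List.nodup_append.mp hnd).2.1).of_cons
      have el := inorder_inj l l' (increasing_node.mp h1).2.2.1
        (increasing_node.mp h2).2.2.1 hndl hL
      have er := inorder_inj r r' (increasing_node.mp h1).2.2.2
        (increasing_node.mp h2).2.2.2 hndr hR
      rw [el, er]

lemma exists_tree : ∀ (n : ℕ) (L : List ℕ), L.length = n → L.Nodup →
    ∃ t : TShelf, t.increasing = true ∧ t.inorder = L := by
  intro n
  induction n using Nat.strong_induction_on with
  | _ n ih =>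
    intro L hlen hnd
    cases L with
    | nil => exact ⟨leaf, rfl, rfl⟩
    | cons x xs =>
      set L := x :: xs with hL
      have hLne : L ≠ [] := by simp [hL]
      have hfne : L.toFinset.Nonempty := by
        simp [hL]
      set m := L.toFinset.min' hfne with hm
      have hmmem : m ∈ L := by
        have := L.toFinset.min'_mem hfne
        simpa using this
      have hmle : ∀ x ∈ L, m ≤ x := fun x hx =>
        L.toFinset.min'_le x (by simpa using hx)
      obtain ⟨L1, L2, hsplit⟩ := List.append_of_mem hmmem
      have hnd' : (L1 ++ m :: L2).Nodup := hsplit ▸ hnd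
      have hmn1 : m ∉ L1 := fun hmem => by
        have := List.nodup_append'.mp hnd'
        exact this.2.2 hmem (List.mem_cons_self)
      have hmn2 : m ∉ L2 := by
        have := ((List.nodup_append.mp hnd').2.1)
        exact (List.nodup_cons.mp this).1
      have hlen' : L.length = L1.length + L2.length + 1 := by
        rw [hsplit]; simp; omega
      obtain ⟨t1, ht1i, ht1o⟩ := ih L1.length (by omega) L1 rfl
        (List.nodup_append.mp hnd').1
      obtain ⟨t2, ht2i, ht2o⟩ := ih L2.length (by omega) L2 rfl
        (List.nodup_cons.mp (List.nodup_append.mp hnd').2.1).2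
      refine ⟨node m t1 t2, ?_, ?_⟩
      · rw [increasing_node]
        refine ⟨?_, ?_, ht1i, ht2i⟩
        · intro hn
          have hr : t1.rootLabel ∈ L1 := by
            have := root_mem (t := t1) hn
            rw [labels_eq_inorder, ht1o] at this
            exact_mod_cast this
          have h1 := hmle _ (hsplit ▸ List.mem_append_left _ hr)
          have h2 : t1.rootLabel ≠ m := fun he => hmn1 (he ▸ hr)
          omega
        · intro hn
          have hr : t2.rootLabel ∈ L2 := by
            have := root_mem (t := t2) hn
            rw [labels_eq_inorder, ht2o] at this
            exact_mod_cast this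
          have h1 := hmle _ (hsplit ▸ List.mem_append_right _ (List.mem_cons_of_mem _ hr))
          have h2 : t2.rootLabel ≠ m := fun he => hmn2 (he ▸ hr)
          omega
      · show t1.inorder ++ m :: t2.inorder = L
        rw [ht1o, ht2o, hsplit]

end TShelf

lemma countP_filter_range (m : ℕ) (P : ℕ → Prop) [DecidablePred P] :
    ((Finset.range m).filter P).card = (List.range m).countP (fun i => decide (P i)) := by
  induction m with
  | zero => simp
  | succ m ih =>
    rw [Finset.range_add_one, Finset.filter_insert, List.range_succ, List.countP_append]
    by_cases h : P m
    · rw [if_pos h, Finset.card_insert_of_notMem (by simp), ih]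
      simp [h]
    · rw [if_neg h, ih]
      simp [h]

lemma descents_ofFn : ∀ (n : ℕ) (g : ℕ → ℕ),
    descents (List.ofFn (fun i : Fin n => g i)) =
      (List.range (n - 1)).countP (fun i => decide (g (i + 1) < g i))
  | 0, g => by simp [descents]
  | 1, g => by simp [descents, List.ofFn_succ]
  | (n + 2), g => by
    have ih := descents_ofFn (n + 1) (fun i => g (i + 1))
    simp only [Nat.add_sub_cancel] at ih ⊢
    rw [List.ofFn_succ]
    have htail : (List.ofFn fun i : Fin (n + 1) => g ((Fin.succ i : Fin (n + 2)) : ℕ)) =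
        List.ofFn fun i : Fin (n + 1) => g ((i : ℕ) + 1) := rfl
    rw [htail, descents_cons]
    have hhead : (List.ofFn fun i : Fin (n + 1) => g ((i : ℕ) + 1)).head? = some (g 1) := by
      rw [List.ofFn_succ]
      simp
    rw [hhead, ih, show n + 2 - 1 = n + 1 from rfl, List.range_succ_eq_map,
      List.countP_cons, List.countP_map,
      show ((fun i => decide (g (i + 1) < g i)) ∘ Nat.succ) =
        (fun i => decide (g (i + 1 + 1) < g (i + 1))) from rfl]
    simp only [Function.comp, Fin.val_zero, Nat.zero_add, decide_eq_true_eq]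
    by_cases h : g 1 < g 0 <;> simp [h] <;> omega

lemma perm_desc (n : ℕ) (σ : Equiv.Perm (Fin n)) :
    (Finset.univ.filter (fun p : Fin n × Fin n =>
        (p.2 : ℕ) = (p.1 : ℕ) + 1 ∧ σ p.2 < σ p.1)).card =
      descents (List.ofFn fun i : Fin n => ((σ i : ℕ) + 1)) := by
  classical
  set g : ℕ → ℕ := fun i => if h : i < n then ((σ ⟨i, h⟩ : ℕ) + 1) else 0 with hg
  have hofn : (List.ofFn fun i : Fin n => ((σ i : ℕ) + 1)) =
      List.ofFn (fun i : Fin n => g (i : ℕ)) := by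
    congr 1
    funext i
    simp [hg, i.isLt]
  rw [hofn, descents_ofFn, ← countP_filter_range (n - 1) (fun i => g (i + 1) < g i)]
  symm
  apply Finset.card_bij (fun (a : ℕ) (ha : a ∈ (Finset.range (n-1)).filter
      (fun i => g (i + 1) < g i)) =>
    ((⟨a, by have := (Finset.mem_filter.mp ha).1; simp at this; omega⟩ : Fin n),
     (⟨a + 1, by have := (Finset.mem_filter.mp ha).1; simp at this; omega⟩ : Fin n)))
  · intro a ha
    have h1 : a ∈ Finset.range (n - 1) := (Finset.mem_filter.mp ha).1
    have h2 : g (a + 1) < g a := (Finset.mem_filter.mp ha).2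
    simp only [Finset.mem_range] at h1
    have ha1 : a < n := by omega
    have ha2 : a + 1 < n := by omega
    rw [hg] at h2
    simp only [dif_pos ha1, dif_pos ha2] at h2
    refine Finset.mem_filter.mpr ⟨Finset.mem_univ _, rfl, ?_⟩
    dsimp only
    rw [Fin.lt_def]
    omega
  · intro a ha b hb hab
    simpa using congrArg (fun p => (p.1 : ℕ)) hab
  · intro p hp
    simp only [Finset.mem_filter, Finset.mem_univ, true_and] at hp
    obtain ⟨hp1, hp2⟩ := hp
    have hlt : (p.1 : ℕ) < n - 1 := by have := p.2.isLt; omega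
    refine ⟨(p.1 : ℕ), Finset.mem_filter.mpr ⟨Finset.mem_range.mpr hlt, ?_⟩, ?_⟩
    · have h1 : (p.1 : ℕ) < n := p.1.isLt
      have h2 : (p.1 : ℕ) + 1 < n := by omega
      rw [hg]
      simp only [dif_pos h1, dif_pos h2]
      have e2 : (⟨(p.1 : ℕ) + 1, h2⟩ : Fin n) = p.2 := by
        apply Fin.ext; simp [hp1]
      have e1 : (⟨(p.1 : ℕ), h1⟩ : Fin n) = p.1 := by apply Fin.ext; rfl
      rw [e1, e2]
      have := hp2
      rw [Fin.lt_def] at this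
      omega
    · apply Prod.ext
      · apply Fin.ext; rfl
      · apply Fin.ext; simp [hp1]

lemma ofFn_perm_multiset (n : ℕ) (σ : Equiv.Perm (Fin n)) :
    ((List.ofFn fun i : Fin n => ((σ i : ℕ) + 1)) : Multiset ℕ) =
      (Finset.Icc 1 n).val := by
  classical
  set L := List.ofFn fun i : Fin n => ((σ i : ℕ) + 1) with hL
  have hnd : L.Nodup := by
    rw [hL, List.nodup_ofFn]
    intro i j hij
    simp only at hij
    exact σ.injective (Fin.ext (by omega))
  have hfin : (⟨(L : Multiset ℕ), hnd⟩ : Finset ℕ) = Finset.Icc 1 n := by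
    apply Finset.ext
    intro x
    simp only [Finset.mem_mk, Multiset.mem_coe, Finset.mem_Icc]
    constructor
    · intro hx
      change x ∈ L at hx
      rw [hL, List.mem_ofFn] at hx
      obtain ⟨i, hi⟩ := hx
      have h2 := (σ i).isLt
      omega
    · intro ⟨hx1, hx2⟩
      change x ∈ L
      rw [hL, List.mem_ofFn]
      refine ⟨σ.symm ⟨x - 1, by omega⟩, ?_⟩
      simp only [Equiv.apply_symm_apply]
      omega
  exact congrArg Finset.val hfin

/-- treeshelves of size `n` with exactly `k` left children are
equinumerous with permutations of `{1,…,n}` with exactly `k` descents. -/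
theorem stmt1 (n k : ℕ) (hn : 1 ≤ n) (hk : k ≤ n - 1) :
    Nat.card {t : TShelf // TShelf.IsShelf n t ∧ t.numLeft = k} =
      Nat.card {σ : Equiv.Perm (Fin n) //
        (Finset.univ.filter (fun p : Fin n × Fin n =>
          (p.2 : ℕ) = (p.1 : ℕ) + 1 ∧ σ p.2 < σ p.1)).card = k} := by
  classical
  have h1 : Nat.card {t : TShelf // TShelf.IsShelf n t ∧ t.numLeft = k} =
      Nat.card {L : List ℕ // (↑L : Multiset ℕ) = (Finset.Icc 1 n).val ∧
        descents L = k} := by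
    apply Nat.card_eq_of_bijective
      (f := fun t => ⟨t.1.inorder,
        by rw [← TShelf.labels_eq_inorder]; exact t.2.1.1,
        by rw [TShelf.descents_inorder t.2.1.2]; exact t.2.2⟩)
    constructor
    · rintro ⟨t1, ⟨hl1, hi1⟩, hk1⟩ ⟨t2, ⟨hl2, hi2⟩, hk2⟩ h
      simp only [Subtype.mk.injEq] at h ⊢
      have hnd : t1.inorder.Nodup := by
        have h2 : ((t1.inorder : Multiset ℕ)).Nodup := by
          rw [← TShelf.labels_eq_inorder, hl1]; exact (Finset.Icc 1 n).nodup
        exact Multiset.coe_nodup.mp h2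
      exact TShelf.inorder_inj t1 t2 hi1 hi2 hnd h
    · rintro ⟨L, hm, hd⟩
      have hnd : L.Nodup := Multiset.coe_nodup.mp (hm ▸ (Finset.Icc 1 n).nodup)
      obtain ⟨t, hti, hto⟩ := TShelf.exists_tree L.length L rfl hnd
      refine ⟨⟨t, ⟨⟨?_, hti⟩, ?_⟩⟩, ?_⟩
      · rw [TShelf.labels_eq_inorder, hto]; exact hm
      · rw [← TShelf.descents_inorder hti, hto]; exact hd
      · simp only [Subtype.mk.injEq]; exact hto
  have h2 : Nat.card {σ : Equiv.Perm (Fin n) //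
        (Finset.univ.filter (fun p : Fin n × Fin n =>
          (p.2 : ℕ) = (p.1 : ℕ) + 1 ∧ σ p.2 < σ p.1)).card = k} =
      Nat.card {L : List ℕ // (↑L : Multiset ℕ) = (Finset.Icc 1 n).val ∧
        descents L = k} := by
    apply Nat.card_eq_of_bijective
      (f := fun σ => ⟨List.ofFn (fun i : Fin n => ((σ.1 i : ℕ) + 1)),
        ofFn_perm_multiset n σ.1,
        by rw [← perm_desc]; exact σ.2⟩)
    constructor
    · rintro ⟨σ, hσ⟩ ⟨τ, hτ⟩ h
      simp only [Subtype.mk.injEq] at h ⊢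
      have hf := List.ofFn_injective h
      ext i
      have := congrFun hf i
      omega
    · rintro ⟨L, hm, hd⟩
      have hlen : L.length = n := by
        have h3 := congrArg Multiset.card hm
        simpa [Nat.card_Icc] using h3
      have hmemL : ∀ x ∈ L, 1 ≤ x ∧ x ≤ n := by
        intro x hx
        have h4 : x ∈ Finset.Icc 1 n := by
          rw [Finset.mem_def, ← hm]
          exact Multiset.mem_coe.mpr hx
        exact Finset.mem_Icc.mp h4
      have hnd : L.Nodup := Multiset.coe_nodup.mp (hm ▸ (Finset.Icc 1 n).nodup)
      have hcast : ∀ i : Fin n, (i : ℕ) < L.length := fun i => by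
        rw [hlen]; exact i.isLt
      set u : Fin n → Fin n := fun i =>
        ⟨L.get ⟨(i : ℕ), hcast i⟩ - 1, by
          have h5 := hmemL _ (L.get_mem ⟨(i : ℕ), hcast i⟩)
          omega⟩ with hu
      have hinj : Function.Injective u := by
        intro i j hij
        rw [hu] at hij
        simp only [Fin.mk.injEq] at hij
        have b1 := hmemL _ (L.get_mem ⟨(i : ℕ), hcast i⟩)
        have b2 := hmemL _ (L.get_mem ⟨(j : ℕ), hcast j⟩)
        have hgeq : L.get ⟨(i : ℕ), hcast i⟩ = L.get ⟨(j : ℕ), hcast j⟩ := by omega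
        have := List.nodup_iff_injective_get.mp hnd hgeq
        exact Fin.ext (by simpa using congrArg Fin.val this)
      set σ₀ : Equiv.Perm (Fin n) :=
        Equiv.ofBijective u (Finite.injective_iff_bijective.mp hinj) with hσ₀
      have happ : ∀ i : Fin n, σ₀ i = u i := fun i => rfl
      have hofn : List.ofFn (fun i : Fin n => ((σ₀ i : ℕ) + 1)) = L := by
        apply List.ext_get
        · simp [hlen]
        · intro i h1 h2
          rw [List.get_ofFn]
          simp only [happ, hu]
          have h5 := hmemL _ (L.get_mem ⟨i, h2⟩)
          have h6 : ((Fin.cast (by simp) (⟨i, h1⟩ : Fin (List.ofFn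
              (fun i : Fin n => ((σ₀ i : ℕ) + 1))).length) : Fin n) : ℕ) = i := rfl
          simp only [h6]
          omega
      refine ⟨⟨σ₀, ?_⟩, ?_⟩
      · rw [perm_desc n σ₀, hofn]; exact hd
      · exact Subtype.ext hofn
  rw [h1, h2]
end

section
/- For every n ≥ 1, the total number of left children summed over all treeshelves of size n (the popularity of left children) equals the Lah number n!·(n−1)/2; equivalently, the exponential generating function of this popularity is z²/(2z² − 4z + 2) = z²/(2(1−z)²). -/
namespace TShelf

/-! ### Auxiliary definitions -/

def size : TShelf → ℕ
  | leaf => 0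
  | node _ l r => l.size + r.size + 1

def numRight : TShelf → ℕ
  | leaf => 0
  | node _ l r => (if r.isNode then 1 else 0) + l.numRight + r.numRight

def mirror : TShelf → TShelf
  | leaf => leaf
  | node a l r => node a r.mirror l.mirror

def leafPaths : TShelf → List (List Bool)
  | leaf => [[]]
  | node _ l r => l.leafPaths.map (List.cons false) ++ r.leafPaths.map (List.cons true)

def ins : TShelf → List Bool → ℕ → TShelf
  | leaf, _, m => node m leaf leaf
  | node a l r, [], _ => node a l r
  | node a l r, false :: p, m => node a (ins l p m) r
  | node a l r, true :: p, m => node a l (ins r p m)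

def del : TShelf → ℕ → TShelf
  | leaf, _ => leaf
  | node a l r, m => if a = m then leaf else node a (del l m) (del r m)

def fp : TShelf → ℕ → List Bool
  | leaf, _ => []
  | node a l r, m =>
      if a = m then [] else if m ∈ l.labels then false :: fp l m else true :: fp r m

def shelfList : ℕ → List TShelf
  | 0 => [leaf]
  | n+1 => (shelfList n).flatMap fun s => s.leafPaths.map fun p => ins s p (n+1)

/-! ### Basic lemmas -/

lemma isNode_mirror (t : TShelf) : t.mirror.isNode = t.isNode := by cases t <;> rfl

lemma rootLabel_mirror (t : TShelf) : t.mirror.rootLabel = t.rootLabel := by cases t <;> rfl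

lemma mirror_mirror (t : TShelf) : t.mirror.mirror = t := by
  induction t with
  | leaf => rfl
  | node a l r ihl ihr => simp [mirror, ihl, ihr]

lemma labels_mirror (t : TShelf) : t.mirror.labels = t.labels := by
  induction t with
  | leaf => rfl
  | node a l r ihl ihr => simp [mirror, labels, ihl, ihr, add_comm]

lemma increasing_mirror (t : TShelf) : t.mirror.increasing = t.increasing := by
  induction t with
  | leaf => rfl
  | node a l r ihl ihr =>
      simp only [mirror, increasing, isNode_mirror, rootLabel_mirror, ihl, ihr]
      cases (!l.isNode || decide (a < l.rootLabel)) <;>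
        cases (!r.isNode || decide (a < r.rootLabel)) <;>
        cases l.increasing <;> cases r.increasing <;> rfl

lemma numLeft_mirror (t : TShelf) : t.mirror.numLeft = t.numRight := by
  induction t with
  | leaf => rfl
  | node a l r ihl ihr =>
      cases l <;> cases r <;>
        simp [mirror, numLeft, numRight, isNode] at * <;> omega

lemma card_labels (t : TShelf) : Multiset.card t.labels = t.size := by
  induction t with
  | leaf => rfl
  | node a l r ihl ihr =>
      simp only [labels, Multiset.card_cons, Multiset.card_add, size, ihl, ihr]
      try omega

lemma numLeft_add_numRight (t : TShelf) :
    t.numLeft + t.numRight + (if t.isNode then 1 else 0) = t.size := by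
  induction t with
  | leaf => rfl
  | node a l r ihl ihr =>
      cases l <;> cases r <;>
        simp [numLeft, numRight, isNode, size] at * <;> omega

lemma labels_eq_zero {t : TShelf} (h : t.labels = 0) : t = leaf := by
  cases t with
  | leaf => rfl
  | node a l r => simp [labels] at h

lemma rootLabel_mem {t : TShelf} (h : t.isNode = true) : t.rootLabel ∈ t.labels := by
  cases t with
  | leaf => simp [isNode] at h
  | node a l r => simp [rootLabel, labels]

/-! ### leafPaths lemmas -/

lemma length_leafPaths (t : TShelf) : t.leafPaths.length = t.size + 1 := by
  induction t with
  | leaf => rfl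
  | node a l r ihl ihr => simp [leafPaths, size, ihl, ihr]; omega

lemma nodup_leafPaths (t : TShelf) : t.leafPaths.Nodup := by
  induction t with
  | leaf => simp [leafPaths]
  | node a l r ihl ihr =>
      refine List.Nodup.append (ihl.map ?_) (ihr.map ?_) ?_
      · intro x y h; injection h
      · intro x y h; injection h
      · intro x hx hy
        rcases List.mem_map.1 hx with ⟨p, _, rfl⟩
        rcases List.mem_map.1 hy with ⟨q, _, h⟩
        simp at h

/-! ### ins lemmas -/

lemma isNode_ins (t : TShelf) (p : List Bool) (m : ℕ) : (ins t p m).isNode = true := by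
  match t, p with
  | leaf, _ => rfl
  | node .., [] => rfl
  | node .., false :: _ => rfl
  | node .., true :: _ => rfl

lemma rootLabel_ins (t : TShelf) (p : List Bool) (m : ℕ) :
    (ins t p m).rootLabel = if t.isNode then t.rootLabel else m := by
  match t, p with
  | leaf, _ => rfl
  | node .., [] => rfl
  | node .., false :: _ => rfl
  | node .., true :: _ => rfl

lemma labels_ins {t : TShelf} {p : List Bool} (m : ℕ) (hp : p ∈ t.leafPaths) :
    (ins t p m).labels = m ::ₘ t.labels := by
  induction t generalizing p with
  | leaf =>
      simp only [leafPaths, List.mem_singleton] at hp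
      subst hp; simp [ins, labels]
  | node a l r ihl ihr =>
      simp only [leafPaths, List.mem_append, List.mem_map] at hp
      rcases hp with ⟨q, hq, rfl⟩ | ⟨q, hq, rfl⟩
      · show (node a (ins l q m) r).labels = _
        simp only [labels, ihl hq, ← Multiset.singleton_add]
        abel
      · show (node a l (ins r q m)).labels = _
        simp only [labels, ihr hq, ← Multiset.singleton_add]
        abel

lemma cond_ins {a m : ℕ} (t : TShelf) (p : List Bool) (ham : a < m)
    (h : (!t.isNode || decide (a < t.rootLabel)) = true) :
    (!(ins t p m).isNode || decide (a < (ins t p m).rootLabel)) = true := by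
  simp only [isNode_ins, rootLabel_ins, Bool.not_true, Bool.false_or, decide_eq_true_iff]
  cases ht : t.isNode
  · simpa [ht] using ham
  · simp only [ht, Bool.not_true, Bool.false_or, decide_eq_true_iff, if_true] at h ⊢
    exact h

lemma increasing_ins {t : TShelf} {p : List Bool} {m : ℕ} (hp : p ∈ t.leafPaths)
    (hinc : t.increasing = true) (hm : ∀ x ∈ t.labels, x < m) :
    (ins t p m).increasing = true := by
  induction t generalizing p with
  | leaf =>
      simp only [leafPaths, List.mem_singleton] at hp
      subst hp; simp [ins, increasing, isNode]
  | node a l r ihl ihr =>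
      have ham : a < m := hm a (by simp [labels])
      obtain ⟨⟨⟨h1, h2⟩, h3⟩, h4⟩ : ((_ ∧ _) ∧ _) ∧ _ := by
        simpa only [increasing, Bool.and_eq_true] using hinc
      simp only [leafPaths, List.mem_append, List.mem_map] at hp
      rcases hp with ⟨q, hq, rfl⟩ | ⟨q, hq, rfl⟩
      · show (node a (ins l q m) r).increasing = true
        simp only [increasing, Bool.and_eq_true]
        exact ⟨⟨⟨cond_ins l q ham h1, h2⟩,
          ihl hq h3 (fun x hx => hm x (by simp [labels]; tauto))⟩, h4⟩
      · show (node a l (ins r q m)).increasing = true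
        simp only [increasing, Bool.and_eq_true]
        exact ⟨⟨⟨h1, cond_ins r q ham h2⟩, h3⟩,
          ihr hq h4 (fun x hx => hm x (by simp [labels]; tauto))⟩

/-! ### del lemmas -/

lemma del_of_not_mem {t : TShelf} {m : ℕ} (h : m ∉ t.labels) : del t m = t := by
  induction t with
  | leaf => rfl
  | node a l r ihl ihr =>
      simp only [labels, Multiset.mem_cons, Multiset.mem_add, not_or] at h
      obtain ⟨h1, h2, h3⟩ := h
      simp [del, Ne.symm h1, ihl h2, ihr h3]

lemma cond_del {a : ℕ} (m : ℕ) {t : TShelf}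
    (h : (!t.isNode || decide (a < t.rootLabel)) = true) :
    (!(del t m).isNode || decide (a < (del t m).rootLabel)) = true := by
  cases t with
  | leaf => simp [del, isNode]
  | node b l r =>
      by_cases hbm : b = m
      · simp [del, hbm, isNode]
      · simp only [del, hbm, ↓reduceIte, isNode, rootLabel, Bool.not_true, Bool.false_or] at h ⊢
        exact h

lemma main_del {t : TShelf} {m : ℕ} (hinc : t.increasing = true)
    (hmem : m ∈ t.labels) (hle : ∀ x ∈ t.labels, x ≤ m)
    (hcount : t.labels.count m = 1) :
    (del t m).labels = t.labels.erase m ∧ (del t m).increasing = true ∧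
      fp t m ∈ (del t m).leafPaths ∧ ins (del t m) (fp t m) m = t := by
  induction t with
  | leaf => simp [labels] at hmem
  | node a l r ihl ihr =>
      obtain ⟨⟨⟨h1, h2⟩, h3⟩, h4⟩ : ((_ ∧ _) ∧ _) ∧ _ := by
        simpa only [increasing, Bool.and_eq_true] using hinc
      by_cases ham : a = m
      · subst ham
        obtain rfl : l = leaf := by
          cases l with
          | leaf => rfl
          | node b l1 l2 =>
              exfalso
              have hb : b ≤ a := hle b (by simp [labels])
              simp only [isNode, rootLabel, Bool.not_true, Bool.false_or,
                decide_eq_true_iff] at h1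
              have := of_decide_eq_true h1
              omega
        obtain rfl : r = leaf := by
          cases r with
          | leaf => rfl
          | node b r1 r2 =>
              exfalso
              have hb : b ≤ a := hle b (by simp [labels])
              simp only [isNode, rootLabel, Bool.not_true, Bool.false_or,
                decide_eq_true_iff] at h2
              have := of_decide_eq_true h2
              omega
        refine ⟨?_, ?_, ?_, ?_⟩
        · simp [del, labels]
        · simp [del, increasing]
        · simp [del, fp, leafPaths]
        · simp [del, fp, ins]
      · have hmem' : m ∈ l.labels ∨ m ∈ r.labels := by
          simpa [labels, Ne.symm ham] using hmem
        have hcount' : l.labels.count m + r.labels.count m = 1 := by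
          have := hcount
          simp only [labels, Multiset.count_cons, Multiset.count_add] at this
          rw [if_neg (Ne.symm ham)] at this
          omega
        have hle_l : ∀ x ∈ l.labels, x ≤ m := fun x hx => hle x (by simp [labels]; tauto)
        have hle_r : ∀ x ∈ r.labels, x ≤ m := fun x hx => hle x (by simp [labels]; tauto)
        by_cases hml : m ∈ l.labels
        · have hmr : m ∉ r.labels := by
            intro hc
            have := Multiset.one_le_count_iff_mem.2 hml
            have := Multiset.one_le_count_iff_mem.2 hc
            omega
          have hcl : l.labels.count m = 1 := by
            have := Multiset.count_eq_zero.2 hmr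
            omega
          obtain ⟨e1, e2, e3, e4⟩ := ihl h3 hml hle_l hcl
          have hdel : del (node a l r) m = node a (del l m) r := by
            simp [del, ham, del_of_not_mem hmr]
          have hfp : fp (node a l r) m = false :: fp l m := by
            simp [fp, ham, hml]
          refine ⟨?_, ?_, ?_, ?_⟩
          · rw [hdel]
            simp only [labels, e1]
            rw [Multiset.erase_cons_tail _ ham,
              Multiset.erase_add_left_pos _ hml]
          · rw [hdel]
            simp only [increasing, Bool.and_eq_true]
            exact ⟨⟨⟨cond_del m h1, h2⟩, e2⟩, h4⟩
          · rw [hdel, hfp]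
            simp only [leafPaths, List.mem_append, List.mem_map]
            exact Or.inl ⟨fp l m, e3, rfl⟩
          · rw [hdel, hfp]
            show node a (ins (del l m) (fp l m) m) r = node a l r
            rw [e4]
        · have hmr : m ∈ r.labels := by tauto
          have hcr : r.labels.count m = 1 := by
            have := Multiset.count_eq_zero.2 hml
            omega
          obtain ⟨e1, e2, e3, e4⟩ := ihr h4 hmr hle_r hcr
          have hdel : del (node a l r) m = node a l (del r m) := by
            simp [del, ham, del_of_not_mem hml]
          have hfp : fp (node a l r) m = true :: fp r m := by
            simp [fp, ham, hml]
          refine ⟨?_, ?_, ?_, ?_⟩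
          · rw [hdel]
            simp only [labels, e1]
            rw [Multiset.erase_cons_tail _ ham,
              Multiset.erase_add_right_pos _ hmr]
          · rw [hdel]
            simp only [increasing, Bool.and_eq_true]
            exact ⟨⟨⟨h1, cond_del m h2⟩, h3⟩, e2⟩
          · rw [hdel, hfp]
            simp only [leafPaths, List.mem_append, List.mem_map]
            exact Or.inr ⟨fp r m, e3, rfl⟩
          · rw [hdel, hfp]
            show node a l (ins (del r m) (fp r m) m) = node a l r
            rw [e4]

lemma del_ins {t : TShelf} {p : List Bool} {m : ℕ} (hp : p ∈ t.leafPaths)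
    (hm : m ∉ t.labels) : del (ins t p m) m = t := by
  induction t generalizing p with
  | leaf =>
      simp only [leafPaths, List.mem_singleton] at hp
      subst hp; simp [ins, del]
  | node a l r ihl ihr =>
      simp only [labels, Multiset.mem_cons, Multiset.mem_add, not_or] at hm
      obtain ⟨h1, h2, h3⟩ := hm
      simp only [leafPaths, List.mem_append, List.mem_map] at hp
      rcases hp with ⟨q, hq, rfl⟩ | ⟨q, hq, rfl⟩
      · show del (node a (ins l q m) r) m = node a l r
        simp [del, Ne.symm h1, ihl hq h2, del_of_not_mem h3]
      · show del (node a l (ins r q m)) m = node a l r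
        simp [del, Ne.symm h1, ihr hq h3, del_of_not_mem h2]

lemma fp_ins {t : TShelf} {p : List Bool} {m : ℕ} (hp : p ∈ t.leafPaths)
    (hm : m ∉ t.labels) : fp (ins t p m) m = p := by
  induction t generalizing p with
  | leaf =>
      simp only [leafPaths, List.mem_singleton] at hp
      subst hp; simp [ins, fp]
  | node a l r ihl ihr =>
      simp only [labels, Multiset.mem_cons, Multiset.mem_add, not_or] at hm
      obtain ⟨h1, h2, h3⟩ := hm
      simp only [leafPaths, List.mem_append, List.mem_map] at hp
      rcases hp with ⟨q, hq, rfl⟩ | ⟨q, hq, rfl⟩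
      · show fp (node a (ins l q m) r) m = false :: q
        have : m ∈ (ins l q m).labels := by
          rw [labels_ins m hq]; exact Multiset.mem_cons_self m _
        simp [fp, Ne.symm h1, this, ihl hq h2]
      · show fp (node a l (ins r q m)) m = true :: q
        simp [fp, Ne.symm h1, h2, ihr hq h3]

/-! ### shelfList lemmas -/

lemma icc_succ (n : ℕ) : (Finset.Icc 1 (n+1)).val = (n+1) ::ₘ (Finset.Icc 1 n).val := by
  rw [← Finset.insert_val_of_notMem (by simp)]
  congr 1
  rw [← Finset.insert_Icc_right_eq_Icc_add_one (by omega)]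

lemma mem_shelfList (n : ℕ) (t : TShelf) : t ∈ shelfList n ↔ IsShelf n t := by
  induction n generalizing t with
  | zero =>
      simp only [shelfList, List.mem_singleton]
      constructor
      · rintro rfl
        exact ⟨by simp [labels], rfl⟩
      · rintro ⟨h1, -⟩
        apply labels_eq_zero
        rw [h1, Finset.Icc_eq_empty (by omega)]
        rfl
  | succ n ih =>
      simp only [shelfList, List.mem_flatMap, List.mem_map]
      constructor
      · rintro ⟨s, hs, p, hp, rfl⟩
        obtain ⟨hlab, hinc⟩ := (ih s).1 hs
        refine ⟨?_, ?_⟩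
        · rw [labels_ins (n+1) hp, hlab, icc_succ]
        · refine increasing_ins hp hinc ?_
          intro x hx
          rw [hlab] at hx
          have : x ∈ Finset.Icc 1 n := hx
          simp [Finset.mem_Icc] at this
          omega
      · rintro ⟨hlab, hinc⟩
        have hmem : (n+1) ∈ t.labels := by
          rw [hlab]
          exact Finset.mem_def.1 (by simp [Finset.mem_Icc])
        have hle : ∀ x ∈ t.labels, x ≤ n+1 := by
          intro x hx
          rw [hlab] at hx
          have : x ∈ Finset.Icc 1 (n+1) := hx
          simp [Finset.mem_Icc] at this
          omega
        have hcount : t.labels.count (n+1) = 1 := by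
          rw [hlab]
          exact Multiset.count_eq_one_of_mem (Finset.Icc 1 (n+1)).nodup
            (by simpa using hmem)
        obtain ⟨e1, e2, e3, e4⟩ := main_del hinc hmem hle hcount
        refine ⟨del t (n+1), (ih _).2 ⟨?_, e2⟩, fp t (n+1), e3, e4⟩
        rw [e1, hlab, icc_succ, Multiset.erase_cons_head]

lemma not_mem_labels_of_shelf {n : ℕ} {s : TShelf} (hs : s ∈ shelfList n) :
    (n+1) ∉ s.labels := by
  rw [((mem_shelfList n s).1 hs).1]
  intro hc
  have : (n+1) ∈ Finset.Icc 1 n := hc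
  simp [Finset.mem_Icc] at this

lemma nodup_shelfList (n : ℕ) : (shelfList n).Nodup := by
  induction n with
  | zero => simp [shelfList]
  | succ n ih =>
      rw [shelfList, List.nodup_flatMap]
      constructor
      · intro s hs
        refine List.Nodup.map_on ?_ (nodup_leafPaths s)
        intro p hp q hq h
        have hns := not_mem_labels_of_shelf hs
        rw [← fp_ins hp hns, h, fp_ins hq hns]
      · refine ih.imp_of_mem ?_
        intro s₁ s₂ h1 h2 hne
        intro x hx hy
        rcases List.mem_map.1 hx with ⟨p, hp, rfl⟩
        rcases List.mem_map.1 hy with ⟨q, hq, heq⟩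
        apply hne
        rw [← del_ins hp (not_mem_labels_of_shelf h1), ← heq,
          del_ins hq (not_mem_labels_of_shelf h2)]

lemma size_of_shelf {n : ℕ} {t : TShelf} (h : IsShelf n t) : t.size = n := by
  rw [← card_labels, h.1]
  simp

lemma length_shelfList (n : ℕ) : (shelfList n).length = n.factorial := by
  induction n with
  | zero => rfl
  | succ n ih =>
      rw [shelfList, List.length_flatMap]
      have h : ∀ s ∈ shelfList n,
          (s.leafPaths.map fun p => ins s p (n+1)).length = n + 1 := by
        intro s hs
        simp only [Function.comp_apply, List.length_map, length_leafPaths,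
          size_of_shelf ((mem_shelfList n s).1 hs)]
      rw [List.map_congr_left h, List.map_const', List.sum_replicate, smul_eq_mul, ih,
        Nat.factorial_succ]
      ring

end TShelf


/-- the popularity of left children among all treeshelves of size
`n ≥ 1` is the Lah number `n! (n-1)/2`. -/
theorem stmt3 (n : ℕ) (hn : 1 ≤ n) :
    (∑ᶠ t ∈ {t : TShelf | TShelf.IsShelf n t}, t.numLeft) =
      Nat.factorial n * (n - 1) / 2 := by
  classical
  have hset : {t : TShelf | TShelf.IsShelf n t} = ↑(TShelf.shelfList n).toFinset := by
    ext t
    simp [List.mem_toFinset, TShelf.mem_shelfList]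
  rw [hset, finsum_mem_coe_finset]
  set F := (TShelf.shelfList n).toFinset with hF
  have hmemF : ∀ t : TShelf, t ∈ F → TShelf.IsShelf n t := fun t ht =>
    (TShelf.mem_shelfList n t).1 (List.mem_toFinset.1 ht)
  have hmir : ∀ t : TShelf, t ∈ F → t.mirror ∈ F := by
    intro t ht
    have h := hmemF t ht
    refine List.mem_toFinset.2 ((TShelf.mem_shelfList n _).2 ⟨?_, ?_⟩)
    · rw [TShelf.labels_mirror]; exact h.1
    · rw [TShelf.increasing_mirror]; exact h.2
  have h1 : (∑ t ∈ F, t.numLeft) = ∑ t ∈ F, t.numRight := by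
    refine Finset.sum_nbij' (i := TShelf.mirror) (j := TShelf.mirror)
      (fun t ht => hmir t ht) (fun t ht => hmir t ht)
      (fun t _ => TShelf.mirror_mirror t) (fun t _ => TShelf.mirror_mirror t) ?_
    intro t ht
    have := TShelf.numLeft_mirror t.mirror
    rwa [TShelf.mirror_mirror] at this
  have hsum : ∀ t ∈ F, t.numLeft + t.numRight = n - 1 := by
    intro t ht
    have h := hmemF t ht
    have hsize := TShelf.size_of_shelf h
    have hnode : t.isNode = true := by
      cases t with
      | leaf =>
          exfalso
          have : (0:ℕ) = n := by simpa [TShelf.size] using hsize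
          omega
      | node a l r => rfl
    have hh := TShelf.numLeft_add_numRight t
    rw [hnode, if_pos rfl] at hh
    omega
  have hcard : F.card = n.factorial := by
    rw [hF, List.toFinset_card_of_nodup (TShelf.nodup_shelfList n),
      TShelf.length_shelfList]
  have h2 : 2 * ∑ t ∈ F, t.numLeft = n.factorial * (n - 1) := by
    rw [two_mul]
    nth_rw 2 [h1]
    rw [← Finset.sum_add_distrib, Finset.sum_congr rfl hsum, Finset.sum_const,
      smul_eq_mul, hcard]
  omega
end

section
/- For every n ≥ 0, the number of treeshelves of size n avoiding the pattern (left child having a left child) equals e_n, where the sequence (e_n) is defined by the exponential generating function identity ∑_{n≥0} e_n z^n/n! = 1/(1 − sin z) (a shift of the Euler/zigzag numbers). -/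
namespace TShelf

lemma isNode_false {t : TShelf} (h : t.isNode = false) : t = leaf := by
  cases t with
  | leaf => rfl
  | node a l r => simp [isNode] at h

lemma root_le {t : TShelf} (h : t.increasing = true) :
    ∀ x ∈ t.labels, t.rootLabel ≤ x := by
  induction t with
  | leaf => simp [labels]
  | node a l r ihl ihr =>
    simp only [increasing, Bool.and_eq_true, Bool.or_eq_true, Bool.not_eq_true',
      decide_eq_true_eq] at h
    obtain ⟨⟨⟨hl, hr⟩, hil⟩, hir⟩ := h
    intro x hx
    simp only [labels, Multiset.mem_cons, Multiset.mem_add] at hx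
    rcases hx with rfl | hx | hx
    · exact le_rfl
    · rcases hl with hl | hl
      · rw [isNode_false hl] at hx; simp [labels] at hx
      · have : l.rootLabel ≤ x := ihl hil x hx
        exact le_of_lt (lt_of_lt_of_le hl this)
    · rcases hr with hr | hr
      · rw [isNode_false hr] at hx; simp [labels] at hx
      · have : r.rootLabel ≤ x := ihr hir x hx
        exact le_of_lt (lt_of_lt_of_le hr this)

/-- structure lemma -/
lemma node_structure {a : ℕ} {M : Multiset ℕ} (ha : ∀ x ∈ M, a < x) {t : TShelf}
    (hl : t.labels = a ::ₘ M) (hi : t.increasing = true) :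
    t = node a t.left t.right ∧ t.left.labels + t.right.labels = M := by
  cases t with
  | leaf => simp [labels] at hl
  | node b l r =>
    have hb : b = a := by
      have hmem : b ∈ (node b l r).labels := by simp [labels]
      rw [hl] at hmem
      have hba : b ≤ a := by
        have := root_le hi a (by rw [hl]; exact Multiset.mem_cons_self a M)
        simpa [rootLabel] using this
      rcases Multiset.mem_cons.mp hmem with h | h
      · exact h
      · exact absurd (ha b h) (by omega)
    subst hb
    constructor
    · rfl
    · have : b ::ₘ (l.labels + r.labels) = b ::ₘ M := by simpa [labels] using hl
      simpa [left, right] using (Multiset.cons_inj_right b).mp this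

end TShelf

open TShelf


def eSeq : ℕ → ℕ
  | 0 => 1
  | n+1 => ∑ k ∈ (Finset.range (n+1)).attach,
      n.choose k.1 * (if k.1 = 0 then 1 else eSeq (k.1 - 1)) * eSeq (n - k.1)
decreasing_by
  · have := Finset.mem_range.mp k.2; omega
  · omega

def dSeq : ℕ → ℕ
  | 0 => 1
  | n+1 => eSeq n

lemma eSeq_succ (n : ℕ) :
    eSeq (n+1) = ∑ k ∈ Finset.range (n+1), n.choose k * dSeq k * eSeq (n - k) := by
  rw [eSeq]
  rw [← Finset.sum_attach (Finset.range (n+1)) (fun k => n.choose k * dSeq k * eSeq (n - k))]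
  refine Finset.sum_congr rfl fun k _ => ?_
  congr 1
  congr 1
  cases hk : k.1 with
  | zero => simp [dSeq, hk]
  | succ m => simp [dSeq, hk]



lemma increasing_node_iff {a : ℕ} {l r : TShelf} :
    (node a l r).increasing = true ↔
      (l.isNode = true → a < l.rootLabel) ∧ (r.isNode = true → a < r.rootLabel) ∧
        l.increasing = true ∧ r.increasing = true := by
  simp only [increasing, Bool.and_eq_true, Bool.or_eq_true, Bool.not_eq_true',
    decide_eq_true_eq]
  constructor
  · rintro ⟨⟨⟨hl, hr⟩, hil⟩, hir⟩
    refine ⟨?_, ?_, hil, hir⟩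
    · intro h; rcases hl with hl | hl; · rw [h] at hl; cases hl
      · exact hl
    · intro h; rcases hr with hr | hr; · rw [h] at hr; cases hr
      · exact hr
  · rintro ⟨hl, hr, hil, hir⟩
    refine ⟨⟨⟨?_, ?_⟩, hil⟩, hir⟩
    · cases h : l.isNode; · exact Or.inl rfl
      · exact Or.inr (hl h)
    · cases h : r.isNode; · exact Or.inl rfl
      · exact Or.inr (hr h)

lemma avoidsLL_node_iff {a : ℕ} {l r : TShelf} :
    (node a l r).avoidsLL = true ↔
      ¬(l.isNode = true ∧ l.left.isNode = true) ∧ l.avoidsLL = true ∧ r.avoidsLL = true := by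
  simp only [avoidsLL, Bool.and_eq_true, Bool.not_eq_true']
  constructor
  · rintro ⟨⟨h1, h2⟩, h3⟩
    refine ⟨?_, h2, h3⟩
    rintro ⟨ha, hb⟩
    rw [ha, hb] at h1; cases h1
  · rintro ⟨h1, h2, h3⟩
    refine ⟨⟨?_, h2⟩, h3⟩
    cases hx : l.isNode
    · simp
    · cases hy : l.left.isNode
      · simp
      · exact absurd ⟨hx, hy⟩ h1

lemma left_eq_leaf_of {l : TShelf} (h : ¬(l.isNode = true ∧ l.left.isNode = true)) :
    l.left = leaf := by
  cases hn : l.isNode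
  · rw [isNode_false hn]; rfl
  · cases hm : l.left.isNode
    · exact isNode_false hm
    · exact absurd ⟨hn, hm⟩ h

def ETy (M : Multiset ℕ) : Type :=
  {t : TShelf // t.labels = M ∧ t.increasing = true ∧ t.avoidsLL = true}

def GTy (M : Multiset ℕ) : Type :=
  {t : TShelf // t.labels = M ∧ t.increasing = true ∧ t.avoidsLL = true ∧ t.left = leaf}

def PTy (M : Multiset ℕ) : Type :=
  {p : TShelf × TShelf // p.1.labels + p.2.labels = M ∧
    p.1.increasing = true ∧ p.2.increasing = true ∧
    p.1.avoidsLL = true ∧ p.2.avoidsLL = true ∧ p.1.left = leaf}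

lemma labels_sub_lt {a : ℕ} {M : Multiset ℕ} (ha : ∀ x ∈ M, a < x)
    {u : TShelf} (hu : u.labels ≤ M) (hn : u.isNode = true) : a < u.rootLabel :=
  ha _ (Multiset.subset_of_le hu (rootLabel_mem hn))

def eqA {a : ℕ} {M : Multiset ℕ} (ha : ∀ x ∈ M, a < x) : ETy (a ::ₘ M) ≃ PTy M where
  toFun t := ⟨(t.1.left, t.1.right), by
    obtain ⟨t, hL, hI, hA⟩ := t
    obtain ⟨hst, hM⟩ := node_structure ha hL hI
    rw [hst] at hI hA
    rw [increasing_node_iff] at hI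
    rw [avoidsLL_node_iff] at hA
    exact ⟨hM, hI.2.2.1, hI.2.2.2, hA.2.1, hA.2.2, left_eq_leaf_of hA.1⟩⟩
  invFun p := ⟨node a p.1.1 p.1.2, by
    obtain ⟨⟨l, r⟩, hM, hil, hir, hal, har, hll⟩ := p
    have h1 : l.labels ≤ M := le_of_le_of_eq (le_add_right le_rfl) hM
    have h2 : r.labels ≤ M := le_of_le_of_eq (le_add_left le_rfl) hM
    refine ⟨by simp [labels, hM], ?_, ?_⟩
    · rw [increasing_node_iff]
      exact ⟨fun h => labels_sub_lt ha h1 h,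
             fun h => labels_sub_lt ha h2 h, hil, hir⟩
    · rw [avoidsLL_node_iff]
      refine ⟨?_, hal, har⟩
      rintro ⟨-, hx⟩
      rw [hll] at hx; cases hx⟩
  left_inv t := by
    obtain ⟨t, hL, hI, hA⟩ := t
    apply Subtype.ext
    exact (node_structure ha hL hI).1.symm
  right_inv p := by
    apply Subtype.ext
    rfl

def eqG {a : ℕ} {M : Multiset ℕ} (ha : ∀ x ∈ M, a < x) : GTy (a ::ₘ M) ≃ ETy M where
  toFun t := ⟨t.1.right, by
    obtain ⟨t, hL, hI, hA, hleft⟩ := t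
    obtain ⟨hst, hM⟩ := node_structure ha hL hI
    rw [hst] at hI hA
    rw [increasing_node_iff] at hI
    rw [avoidsLL_node_iff] at hA
    rw [hleft] at hM
    simp only [labels, zero_add] at hM
    exact ⟨hM, hI.2.2.2, hA.2.2⟩⟩
  invFun r := ⟨node a leaf r.1, by
    obtain ⟨r, hM, hir, har⟩ := r
    refine ⟨by simp [labels, hM], ?_, ?_, rfl⟩
    · rw [increasing_node_iff]
      refine ⟨?_, ?_, rfl, hir⟩
      · intro h; simp [isNode] at h
      · intro h; exact labels_sub_lt ha (le_of_eq hM) h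
    · rw [avoidsLL_node_iff]
      refine ⟨?_, rfl, har⟩
      rintro ⟨hx, -⟩; simp [isNode] at hx⟩
  left_inv t := by
    obtain ⟨t, hL, hI, hA, hleft⟩ := t
    apply Subtype.ext
    have := (node_structure ha hL hI).1
    simp only
    rw [← hleft]
    exact this.symm
  right_inv r := by
    apply Subtype.ext
    rfl

lemma nat_card_sigma {ι : Type*} [Fintype ι] (f : ι → Type*) (hf : ∀ i, Finite (f i)) :
    Nat.card (Σ i, f i) = ∑ i, Nat.card (f i) := by
  letI : ∀ i, Fintype (f i) := fun i => @Fintype.ofFinite _ (hf i)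
  simp [Nat.card_eq_fintype_card, Fintype.card_sigma]

section Fib

variable (s : Finset ℕ)

def phiP (p : PTy s.val) : {A : Finset ℕ // A ∈ s.powerset} :=
  ⟨p.1.1.labels.toFinset, by
    rw [Finset.mem_powerset]
    intro x hx
    rw [Multiset.mem_toFinset] at hx
    have : x ∈ p.1.1.labels + p.1.2.labels := by
      rw [Multiset.mem_add]; exact Or.inl hx
    rw [p.2.1] at this
    exact this⟩

lemma nodup_fst (p : PTy s.val) : p.1.1.labels.Nodup := by
  have := s.nodup
  rw [← p.2.1, Multiset.nodup_add] at this
  exact this.1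

def fibEquiv (b : {A : Finset ℕ // A ∈ s.powerset}) :
    {p : PTy s.val // phiP s p = b} ≃ GTy b.1.val × ETy (s.val - b.1.val) where
  toFun q :=
    have hA : q.1.1.1.labels = b.1.val := by
      have h1 : q.1.1.1.labels.toFinset = b.1 := congrArg Subtype.val q.2
      rw [← h1]
      exact (Multiset.dedup_eq_self.mpr (nodup_fst s q.1)).symm
    have hB : q.1.1.2.labels = s.val - b.1.val := by
      have h : q.1.1.2.labels = s.val - q.1.1.1.labels :=
        eq_tsub_of_add_eq (by rw [add_comm]; exact q.1.2.1)
      rw [h, hA]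
    (⟨q.1.1.1, hA, q.1.2.2.1, q.1.2.2.2.2.1, q.1.2.2.2.2.2.2⟩,
     ⟨q.1.1.2, hB, q.1.2.2.2.1, q.1.2.2.2.2.2.1⟩)
  invFun x :=
    ⟨⟨(x.1.1, x.2.1), by
      obtain ⟨⟨l, hl1, hl2, hl3, hl4⟩, ⟨r, hr1, hr2, hr3⟩⟩ := x
      have hle : b.1.val ≤ s.val := Finset.val_le_iff.mpr (Finset.mem_powerset.mp b.2)
      refine ⟨?_, hl2, hr2, hl3, hr3, hl4⟩
      show l.labels + r.labels = s.val
      rw [hl1, hr1, add_tsub_cancel_of_le hle]⟩, by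
      apply Subtype.ext
      show (x.1.1 : TShelf).labels.toFinset = b.1
      rw [x.1.2.1, Finset.val_toFinset]⟩
  left_inv q := by
    apply Subtype.ext
    apply Subtype.ext
    rfl
  right_inv x := by
    obtain ⟨⟨l, hl⟩, ⟨r, hr⟩⟩ := x
    refine Prod.ext (Subtype.ext rfl) (Subtype.ext rfl)

end Fib

def eqE0 : ETy 0 ≃ Unit where
  toFun _ := Unit.unit
  invFun _ := ⟨leaf, rfl, rfl, rfl⟩
  left_inv t := by
    apply Subtype.ext
    exact (labels_eq_zero t.2.1).symm
  right_inv _ := rfl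

def eqG0 : GTy 0 ≃ Unit where
  toFun _ := Unit.unit
  invFun _ := ⟨leaf, rfl, rfl, rfl, rfl⟩
  left_inv t := by
    apply Subtype.ext
    exact (labels_eq_zero t.2.1).symm
  right_inv _ := rfl

theorem master (n : ℕ) : ∀ s : Finset ℕ, s.card = n →
    (Finite (ETy s.val) ∧ Nat.card (ETy s.val) = eSeq n) ∧
    (Finite (GTy s.val) ∧ Nat.card (GTy s.val) = dSeq n) := by
  induction n using Nat.strong_induction_on with
  | _ n ih =>
    intro s hs
    match n, hs with
    | 0, hs =>
      have hse : s = ∅ := Finset.card_eq_zero.mp hs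
      subst hse
      have h0 : (∅ : Finset ℕ).val = 0 := rfl
      rw [h0]
      refine ⟨⟨?_, ?_⟩, ⟨?_, ?_⟩⟩
      · exact Finite.of_equiv _ eqE0.symm
      · rw [Nat.card_congr eqE0]; simp [eSeq]
      · exact Finite.of_equiv _ eqG0.symm
      · rw [Nat.card_congr eqG0]; simp [dSeq]
    | (m+1), hs =>
      have hne : s.Nonempty := Finset.card_pos.mp (by omega)
      set a := s.min' hne with hadef
      have hamem : a ∈ s := s.min'_mem hne
      set s' := s.erase a with hs'def
      have hcard' : s'.card = m := by
        rw [hs'def, Finset.card_erase_of_mem hamem, hs]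
        omega
      have hcons : s.val = a ::ₘ s'.val := by
        rw [hs'def, Finset.erase_val]
        exact (Multiset.cons_erase (show a ∈ s.val from hamem)).symm
      have ha : ∀ x ∈ s'.val, a < x := by
        intro x hx
        rw [hs'def] at hx
        have hx' : x ∈ s.erase a := hx
        have hxs : x ∈ s := Finset.mem_of_mem_erase hx'
        have hxa : x ≠ a := Finset.ne_of_mem_erase hx'
        exact lt_of_le_of_ne (s.min'_le x hxs) (Ne.symm hxa)
      -- fibers
      have hfib : ∀ b : {A : Finset ℕ // A ∈ s'.powerset},
          Finite (GTy b.1.val × ETy (s'.val - b.1.val)) ∧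
          Nat.card (GTy b.1.val × ETy (s'.val - b.1.val))
            = dSeq b.1.card * eSeq (m - b.1.card) := by
        intro b
        have hsub : b.1 ⊆ s' := Finset.mem_powerset.mp b.2
        have hble : b.1.card ≤ m := hcard' ▸ Finset.card_le_card hsub
        have hdiff : s'.val - b.1.val = (s' \ b.1).val := (Finset.sdiff_val s' b.1).symm
        have ihb := ih b.1.card (by omega) b.1 rfl
        have ihd := ih (m - b.1.card) (by omega) (s' \ b.1)
          (by rw [Finset.card_sdiff_of_subset hsub, hcard'])
        rw [hdiff]
        obtain ⟨⟨hEf, hEc⟩, -⟩ := ihd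
        obtain ⟨-, hGf, hGc⟩ := ihb
        constructor
        · haveI := hGf; haveI := hEf; exact inferInstance
        · rw [Nat.card_prod, hEc, hGc]
      have hPfin : Finite (PTy s'.val) := by
        have : ∀ b : {A : Finset ℕ // A ∈ s'.powerset},
            Finite {p : PTy s'.val // phiP s' p = b} := by
          intro b
          haveI := (hfib b).1
          exact Finite.of_equiv _ (fibEquiv s' b).symm
        haveI := this
        haveI : Finite (Σ b : {A : Finset ℕ // A ∈ s'.powerset},
            {p : PTy s'.val // phiP s' p = b}) := inferInstance
        exact Finite.of_equiv _ (Equiv.sigmaFiberEquiv (phiP s'))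
      have hPcard : Nat.card (PTy s'.val)
          = ∑ A ∈ s'.powerset, dSeq A.card * eSeq (m - A.card) := by
        rw [← Nat.card_congr (Equiv.sigmaFiberEquiv (phiP s'))]
        rw [nat_card_sigma _ (fun b => @Finite.of_equiv _ _ (hfib b).1 (fibEquiv s' b).symm)]
        rw [← Finset.sum_coe_sort s'.powerset (fun A => dSeq A.card * eSeq (m - A.card))]
        refine Finset.sum_congr rfl fun b _ => ?_
        rw [Nat.card_congr (fibEquiv s' b), (hfib b).2]
      have hsum : ∑ A ∈ s'.powerset, dSeq A.card * eSeq (m - A.card) = eSeq (m+1) := by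
        rw [Finset.sum_powerset s' (fun A => dSeq A.card * eSeq (m - A.card))]
        rw [eSeq_succ, hcard']
        refine Finset.sum_congr rfl fun k hk => ?_
        rw [Finset.mem_range] at hk
        have : ∀ A ∈ Finset.powersetCard k s', dSeq A.card * eSeq (m - A.card)
            = dSeq k * eSeq (m - k) := by
          intro A hA
          rw [(Finset.mem_powersetCard.mp hA).2]
        rw [Finset.sum_congr rfl this, Finset.sum_const, Finset.card_powersetCard, hcard',
          smul_eq_mul, mul_assoc]
      rw [hcons]
      refine ⟨⟨?_, ?_⟩, ⟨?_, ?_⟩⟩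
      · exact Finite.of_equiv _ (eqA ha).symm
      · rw [Nat.card_congr (eqA ha), hPcard, hsum]
      · have : Finite (ETy s'.val) := ((ih m (by omega) s' hcard').1).1
        exact Finite.of_equiv _ (eqG ha).symm
      · rw [Nat.card_congr (eqG ha), ((ih m (by omega) s' hcard').1).2]
        rfl

/-! ### Part B : analysis -/

lemma dSeq_eq (k : ℕ) : dSeq k = if k = 0 then 1 else eSeq (k-1) := by
  cases k <;> simp [dSeq]

lemma eSeq_le_factorial : ∀ n, eSeq n ≤ n.factorial := by
  intro n
  induction n using Nat.strong_induction_on with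
  | _ n ih =>
    match n with
    | 0 => simp [eSeq]
    | (m+1) =>
      rw [eSeq_succ]
      have h1 : ∀ k ∈ Finset.range (m+1),
          m.choose k * dSeq k * eSeq (m-k) ≤ m.choose k * k.factorial * (m-k).factorial := by
        intro k hk
        rw [Finset.mem_range] at hk
        have hd : dSeq k ≤ k.factorial := by
          rw [dSeq_eq]
          split
          · exact k.factorial_pos
          · exact le_trans (ih (k-1) (by omega)) (Nat.factorial_le (by omega))
        have he : eSeq (m-k) ≤ (m-k).factorial := ih (m-k) (by omega)
        exact Nat.mul_le_mul (Nat.mul_le_mul_left _ hd) he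
      calc ∑ k ∈ Finset.range (m+1), m.choose k * dSeq k * eSeq (m-k)
          ≤ ∑ k ∈ Finset.range (m+1), m.choose k * k.factorial * (m-k).factorial :=
            Finset.sum_le_sum h1
        _ = ∑ k ∈ Finset.range (m+1), m.factorial := by
            refine Finset.sum_congr rfl fun k hk => ?_
            rw [Finset.mem_range] at hk
            exact Nat.choose_mul_factorial_mul_factorial (by omega)
        _ = (m+1) * m.factorial := by rw [Finset.sum_const, Finset.card_range, smul_eq_mul]
        _ = (m+1).factorial := (Nat.factorial_succ m).symm

noncomputable section PS
open PowerSeries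

def Fps : ℝ⟦X⟧ := PowerSeries.mk fun n => (eSeq n : ℝ) / n.factorial
def Gps : ℝ⟦X⟧ := PowerSeries.mk fun n => (dSeq n : ℝ) / n.factorial
def sCoeff (n : ℕ) : ℝ := if n % 2 = 1 then (-1)^(n/2) / n.factorial else 0
def cCoeff (n : ℕ) : ℝ := if n % 2 = 0 then (-1)^(n/2) / n.factorial else 0
def Sps : ℝ⟦X⟧ := PowerSeries.mk sCoeff
def Cps : ℝ⟦X⟧ := PowerSeries.mk cCoeff

lemma factorial_succ_real (n : ℕ) :
    ((n+1).factorial : ℝ) = (n+1) * n.factorial := by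
  rw [Nat.factorial_succ]; push_cast; ring

lemma coeff_dF (n : ℕ) : (PowerSeries.coeff (R := ℝ) n) (d⁄dX ℝ Fps) = (eSeq (n+1) : ℝ) / n.factorial := by
  rw [PowerSeries.coeff_derivative, Fps, PowerSeries.coeff_mk, factorial_succ_real]
  have h1 : ((n:ℝ)+1) ≠ 0 := by positivity
  have h2 : (n.factorial : ℝ) ≠ 0 := Nat.cast_ne_zero.mpr n.factorial_ne_zero
  field_simp

lemma deriv_G : d⁄dX ℝ Gps = Fps := by
  ext n
  rw [PowerSeries.coeff_derivative, Gps, Fps, PowerSeries.coeff_mk, PowerSeries.coeff_mk,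
    factorial_succ_real]
  show (dSeq (n+1) : ℝ) / _ * _ = _
  rw [show dSeq (n+1) = eSeq n from rfl]
  have h1 : ((n:ℝ)+1) ≠ 0 := by positivity
  have h2 : (n.factorial : ℝ) ≠ 0 := Nat.cast_ne_zero.mpr n.factorial_ne_zero
  field_simp

lemma deriv_F : d⁄dX ℝ Fps = Gps * Fps := by
  ext n
  rw [coeff_dF, PowerSeries.coeff_mul]
  rw [Finset.Nat.sum_antidiagonal_eq_sum_range_succ_mk]
  have he := eSeq_succ n
  have hcast : (eSeq (n+1) : ℝ)
      = ∑ k ∈ Finset.range (n+1), (n.choose k : ℝ) * dSeq k * eSeq (n-k) := by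
    rw [he]; push_cast; rfl
  rw [hcast, Finset.sum_div]
  refine Finset.sum_congr rfl fun k hk => ?_
  rw [Finset.mem_range] at hk
  rw [Gps, Fps, PowerSeries.coeff_mk, PowerSeries.coeff_mk]
  have hchoose : ((n.factorial : ℕ) : ℝ) = (n.choose k : ℝ) * k.factorial * (n-k).factorial := by
    exact_mod_cast congrArg (fun x : ℕ => (x : ℝ))
      (Nat.choose_mul_factorial_mul_factorial (show k ≤ n by omega)).symm
  have h2 : (n.factorial : ℝ) ≠ 0 := Nat.cast_ne_zero.mpr n.factorial_ne_zero
  have h3 : (k.factorial : ℝ) ≠ 0 := Nat.cast_ne_zero.mpr k.factorial_ne_zero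
  have h4 : ((n-k).factorial : ℝ) ≠ 0 := Nat.cast_ne_zero.mpr (n-k).factorial_ne_zero
  field_simp
  rw [hchoose]
  ring

lemma deriv_S : d⁄dX ℝ Sps = Cps := by
  ext n
  rw [PowerSeries.coeff_derivative, Sps, Cps, PowerSeries.coeff_mk, PowerSeries.coeff_mk,
    sCoeff, cCoeff]
  rcases Nat.even_or_odd n with he | ho
  · have h2 : n % 2 = 0 := Nat.even_iff.mp he
    have h1 : (n+1) % 2 = 1 := by omega
    have h3 : (n+1)/2 = n/2 := by omega
    rw [if_pos h1, if_pos h2, h3, factorial_succ_real]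
    have h4 : ((n:ℝ)+1) ≠ 0 := by positivity
    have h5 : (n.factorial : ℝ) ≠ 0 := Nat.cast_ne_zero.mpr n.factorial_ne_zero
    field_simp
  · have h2 : n % 2 = 1 := Nat.odd_iff.mp ho
    rw [if_neg (by omega), if_neg (by omega)]
    simp

lemma deriv_C : d⁄dX ℝ Cps = -Sps := by
  ext n
  rw [PowerSeries.coeff_derivative, Cps, PowerSeries.coeff_mk, map_neg, Sps,
    PowerSeries.coeff_mk, sCoeff, cCoeff]
  rcases Nat.even_or_odd n with he | ho
  · have h2 : n % 2 = 0 := Nat.even_iff.mp he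
    rw [if_neg (by omega), if_neg (by omega)]
    simp
  · have h2 : n % 2 = 1 := Nat.odd_iff.mp ho
    have h1 : (n+1) % 2 = 0 := by omega
    have h3 : (n+1)/2 = n/2 + 1 := by omega
    rw [if_pos h1, if_pos h2, h3, factorial_succ_real, pow_succ]
    have h4 : ((n:ℝ)+1) ≠ 0 := by positivity
    have h5 : (n.factorial : ℝ) ≠ 0 := Nat.cast_ne_zero.mpr n.factorial_ne_zero
    field_simp

lemma constF : PowerSeries.constantCoeff (R := ℝ) Fps = 1 := by
  simp [Fps, ← PowerSeries.coeff_zero_eq_constantCoeff, eSeq]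

lemma constG : PowerSeries.constantCoeff (R := ℝ) Gps = 1 := by
  simp [Gps, ← PowerSeries.coeff_zero_eq_constantCoeff, dSeq]

lemma constS : PowerSeries.constantCoeff (R := ℝ) Sps = 0 := by
  simp [Sps, ← PowerSeries.coeff_zero_eq_constantCoeff, sCoeff]

lemma constC : PowerSeries.constantCoeff (R := ℝ) Cps = 1 := by
  simp [Cps, ← PowerSeries.coeff_zero_eq_constantCoeff, cCoeff]

lemma C_two : PowerSeries.C (2:ℝ) = (2 : ℝ⟦X⟧) := map_ofNat _ 2

lemma psTwoNeZero : (2 : ℝ⟦X⟧) ≠ 0 := by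
  intro h
  have h2 : (PowerSeries.constantCoeff (R := ℝ)) (2:ℝ⟦X⟧) = 2 := map_ofNat _ 2
  rw [h, map_zero] at h2
  norm_num at h2

lemma deriv_two : d⁄dX ℝ (2 : ℝ⟦X⟧) = 0 := by
  rw [← C_two, PowerSeries.derivative_C]

lemma psDerivMul (f g : ℝ⟦X⟧) :
    d⁄dX ℝ (f * g) = f * d⁄dX ℝ g + g * d⁄dX ℝ f := by
  rw [Derivation.leibniz, smul_eq_mul, smul_eq_mul]

lemma hW : 2 * Fps = Gps^2 + 1 := by
  refine PowerSeries.derivative.ext ?_ ?_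
  · rw [map_add, psDerivMul, deriv_two, deriv_F, sq, psDerivMul, deriv_G]
    rw [Derivation.map_one_eq_zero]
    ring
  · rw [map_add, map_mul, map_pow, map_one, constF, constG,
      show (PowerSeries.constantCoeff (R := ℝ)) (2:ℝ⟦X⟧) = 2 from map_ofNat _ 2]
    norm_num

lemma coeff_two_mul (f : ℝ⟦X⟧) (n : ℕ) :
    PowerSeries.coeff (R := ℝ) n (2 * f) = 2 * PowerSeries.coeff (R := ℝ) n f := by
  rw [← C_two, PowerSeries.coeff_C_mul]

lemma quad_zero (A P Q R0 X0 : ℝ⟦X⟧)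
    (hP0 : PowerSeries.constantCoeff (R := ℝ) P = 0)
    (hQ0 : PowerSeries.constantCoeff (R := ℝ) Q = 0)
    (hR0 : PowerSeries.constantCoeff (R := ℝ) R0 = 0)
    (hX0 : PowerSeries.constantCoeff (R := ℝ) X0 = 0)
    (hdP : d⁄dX ℝ P = A * Q)
    (hdQ : 2 * d⁄dX ℝ Q = P - 2 * R0)
    (hdR : 2 * d⁄dX ℝ R0 = X0 + 2 * Q)
    (hdX : d⁄dX ℝ X0 = A * R0) :
    P = 0 := by
  have key : ∀ n, PowerSeries.coeff (R := ℝ) n P = 0 ∧ PowerSeries.coeff (R := ℝ) n Q = 0 ∧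
      PowerSeries.coeff (R := ℝ) n R0 = 0 ∧ PowerSeries.coeff (R := ℝ) n X0 = 0 := by
    intro n
    induction n using Nat.strong_induction_on with
    | _ n ih =>
      match n with
      | 0 => simp only [PowerSeries.coeff_zero_eq_constantCoeff, hP0, hQ0, hR0, hX0]; tauto
      | (k+1) =>
        have hk1 : ((k:ℝ)+1) ≠ 0 := by positivity
        have hAQ : PowerSeries.coeff (R := ℝ) k (A * Q) = 0 := by
          rw [PowerSeries.coeff_mul]
          refine Finset.sum_eq_zero fun ij hij => ?_
          have hj : ij.1 + ij.2 = k := Finset.HasAntidiagonal.mem_antidiagonal.mp hij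
          rw [(ih ij.2 (by omega)).2.1, mul_zero]
        have hAR : PowerSeries.coeff (R := ℝ) k (A * R0) = 0 := by
          rw [PowerSeries.coeff_mul]
          refine Finset.sum_eq_zero fun ij hij => ?_
          have hj : ij.1 + ij.2 = k := Finset.HasAntidiagonal.mem_antidiagonal.mp hij
          rw [(ih ij.2 (by omega)).2.2.1, mul_zero]
        obtain ⟨ihP, ihQ, ihR, ihX⟩ := ih k (by omega)
        have eP : PowerSeries.coeff (R := ℝ) (k+1) P * ((k:ℝ)+1) = 0 := by
          rw [← PowerSeries.coeff_derivative, hdP, hAQ]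
        have eX : PowerSeries.coeff (R := ℝ) (k+1) X0 * ((k:ℝ)+1) = 0 := by
          rw [← PowerSeries.coeff_derivative, hdX, hAR]
        have eQ : 2 * (PowerSeries.coeff (R := ℝ) (k+1) Q * ((k:ℝ)+1)) = 0 := by
          rw [← PowerSeries.coeff_derivative, ← coeff_two_mul, hdQ, map_sub, coeff_two_mul,
            ihP, ihR]
          ring
        have eR : 2 * (PowerSeries.coeff (R := ℝ) (k+1) R0 * ((k:ℝ)+1)) = 0 := by
          rw [← PowerSeries.coeff_derivative, ← coeff_two_mul, hdR, map_add, coeff_two_mul,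
            ihX, ihQ]
          ring
        refine ⟨?_, ?_, ?_, ?_⟩
        · rcases mul_eq_zero.mp eP with h | h
          · exact h
          · exact absurd h hk1
        · have := mul_eq_zero.mp eQ
          rcases this with h | h
          · norm_num at h
          · rcases mul_eq_zero.mp h with h | h
            · exact h
            · exact absurd h hk1
        · rcases mul_eq_zero.mp eR with h | h
          · norm_num at h
          · rcases mul_eq_zero.mp h with h | h
            · exact h
            · exact absurd h hk1
        · rcases mul_eq_zero.mp eX with h | h
          · exact h
          · exact absurd h hk1
  ext n
  rw [(key n).1, map_zero]

lemma formal_main : Fps * (1 - Sps) = 1 := by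
  have hP : (Gps^2 + 1) * (1 - Sps) - 2 = 0 := by
    apply quad_zero (Gps^2 + 1) _ (Gps * (1 - Sps) - Cps) (Gps * Cps - 1 - Sps)
      ((Gps^2 + 1) * Cps - 2 * Gps)
    · rw [map_sub, map_mul, map_add, map_sub, map_pow, map_one, constG, constS]
      rw [show PowerSeries.constantCoeff (R := ℝ) 2 = 2 from map_ofNat _ 2]
      norm_num
    · rw [map_sub, map_mul, map_sub, map_one, constG, constS, constC]
      norm_num
    · rw [map_sub, map_sub, map_mul, map_one, constG, constS, constC]
      norm_num
    · rw [map_sub, map_mul, map_mul, map_add, map_pow, map_one, constG, constC]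
      rw [show PowerSeries.constantCoeff (R := ℝ) 2 = 2 from map_ofNat _ 2]
      norm_num
    · simp only [map_sub, map_add, psDerivMul, deriv_two, deriv_G, deriv_S, deriv_C,
        Derivation.map_one_eq_zero, sq]
      linear_combination ((1 - Sps) * Gps) * hW
    · simp only [map_sub, map_add, psDerivMul, deriv_two, deriv_G, deriv_S, deriv_C,
        Derivation.map_one_eq_zero, sq]
      linear_combination (1 - Sps) * hW
    · simp only [map_sub, map_add, psDerivMul, deriv_two, deriv_G, deriv_S, deriv_C,
        Derivation.map_one_eq_zero, sq]
      linear_combination Cps * hW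
    · simp only [map_sub, map_add, psDerivMul, deriv_two, deriv_G, deriv_S, deriv_C,
        Derivation.map_one_eq_zero, sq]
      linear_combination (Cps * Gps - 1) * hW
  have h2 : (2:ℝ⟦X⟧) * (Fps * (1 - Sps)) = 2 * 1 := by
    calc (2:ℝ⟦X⟧) * (Fps * (1-Sps)) = (2*Fps) * (1-Sps) := by ring
    _ = (Gps^2+1) * (1-Sps) := by rw [hW]
    _ = 2 := by linear_combination hP
    _ = 2*1 := by ring
  exact mul_left_cancel₀ psTwoNeZero h2

end PS

noncomputable section PS3
open PowerSeries

def uCoeff (j : ℕ) : ℝ := (if j = 0 then 1 else 0) - sCoeff j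

lemma coeff_extract (n : ℕ) :
    ∑ kl ∈ Finset.HasAntidiagonal.antidiagonal n, (eSeq kl.1 : ℝ)/kl.1.factorial * uCoeff kl.2
      = if n = 0 then 1 else 0 := by
  have h := congrArg (PowerSeries.coeff (R := ℝ) n) formal_main
  rw [PowerSeries.coeff_mul, PowerSeries.coeff_one] at h
  rw [← h]
  refine Finset.sum_congr rfl fun kl _ => ?_
  rw [Fps, PowerSeries.coeff_mk, map_sub, PowerSeries.coeff_one, Sps, PowerSeries.coeff_mk]
  rfl

lemma uCoeff_abs (n : ℕ) : |uCoeff n| ≤ 1 := by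
  rcases Nat.eq_zero_or_pos n with rfl | hn
  · simp [uCoeff, sCoeff]
  · have h1 : uCoeff n = - sCoeff n := by
      rw [uCoeff, if_neg (by omega)]; ring
    rw [h1, abs_neg, sCoeff]
    split
    · rw [abs_div, abs_pow, abs_neg, abs_one, one_pow]
      rw [abs_of_nonneg (by positivity : (0:ℝ) ≤ (n.factorial : ℝ))]
      rw [div_le_one (by positivity)]
      exact_mod_cast n.factorial_pos
    · simp

lemma eDivFact_le (n : ℕ) : |(eSeq n : ℝ)/n.factorial| ≤ 1 := by
  rw [abs_div, abs_of_nonneg (by positivity : (0:ℝ) ≤ (eSeq n : ℝ)),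
    abs_of_nonneg (by positivity : (0:ℝ) ≤ (n.factorial : ℝ)),
    div_le_one (by positivity)]
  exact_mod_cast eSeq_le_factorial n

lemma hasSum_sinSeries (z : ℝ) : HasSum (fun n => sCoeff n * z^n) (Real.sin z) := by
  have hsin := Real.hasSum_sin z
  have hinj : Function.Injective (fun k : ℕ => 2*k+1) := fun a b h => by
    have h' : 2*a+1 = 2*b+1 := h
    omega
  have hzero : ∀ x ∉ Set.range (fun k : ℕ => 2*k+1), sCoeff x * z^x = 0 := by
    intro x hx
    have hpar : x % 2 = 0 := by
      by_contra h
      exact hx ⟨x/2, show 2*(x/2)+1 = x by omega⟩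
    rw [sCoeff, if_neg (by omega), zero_mul]
  refine (Function.Injective.hasSum_iff hinj hzero).mp ?_
  have heq : (fun k : ℕ => sCoeff (2*k+1) * z^(2*k+1))
      = fun k : ℕ => (-1)^k * z^(2*k+1) / (2*k+1).factorial := by
    funext k
    rw [sCoeff, if_pos (by omega), show (2*k+1)/2 = k from by omega]
    ring
  show HasSum (fun k : ℕ => sCoeff (2*k+1) * z^(2*k+1)) (Real.sin z)
  rw [heq]
  exact hsin

lemma hasSum_uSeries {z : ℝ} : HasSum (fun n => uCoeff n * z^n) (1 - Real.sin z) := by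
  have h1 : HasSum (fun n : ℕ => (if n = 0 then (1:ℝ) else 0) * z^n) 1 := by
    have he : (fun n : ℕ => (if n = 0 then (1:ℝ) else 0) * z^n)
        = fun n : ℕ => if n = 0 then 1 else 0 := by
      funext n
      by_cases h : n = 0 <;> simp [h]
    rw [he]
    exact hasSum_ite_eq 0 1
  have h2 := h1.sub (hasSum_sinSeries z)
  have he : (fun n => uCoeff n * z^n)
      = fun n : ℕ => (if n = 0 then (1:ℝ) else 0) * z^n - sCoeff n * z^n := by
    funext n
    rw [uCoeff]
    ring
  rw [he]
  exact h2

end PS3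


/-- treeshelves of size `n` avoiding "left child having a left
child" have e.g.f. `1/(1 - sin z)` (shifted Euler numbers). -/
theorem stmt9 :
    ∃ ε > (0 : ℝ), ∀ z : ℝ, |z| < ε →
      HasSum (fun n : ℕ =>
        (Nat.card {t : TShelf // TShelf.IsShelf n t ∧ t.avoidsLL = true} : ℝ) *
          z ^ n / (Nat.factorial n : ℝ))
        (1 / (1 - Real.sin z)) := by
  refine ⟨1, one_pos, fun z hz => ?_⟩
  have hcard : ∀ n : ℕ,
      Nat.card {t : TShelf // TShelf.IsShelf n t ∧ t.avoidsLL = true} = eSeq n := by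
    intro n
    have h := ((master n (Finset.Icc 1 n) (by rw [Nat.card_Icc]; omega)).1).2
    rw [← h]
    have : Nat.card (ETy (Finset.Icc 1 n).val)
        = Nat.card {t : TShelf // t.labels = (Finset.Icc 1 n).val ∧
            t.increasing = true ∧ t.avoidsLL = true} := rfl
    rw [this]
    apply Nat.card_congr
    apply Equiv.subtypeEquivRight
    intro t
    unfold TShelf.IsShelf
    tauto
  have habs : |z| < 1 := hz
  have hsf : Summable fun n : ℕ => ‖(eSeq n : ℝ)/n.factorial * z^n‖ := by
    apply Summable.of_nonneg_of_le (fun n => norm_nonneg _)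
      (fun n => ?_) (summable_geometric_of_lt_one (abs_nonneg z) habs)
    rw [norm_mul, norm_pow, Real.norm_eq_abs, Real.norm_eq_abs]
    calc |(eSeq n : ℝ)/n.factorial| * |z|^n ≤ 1 * |z|^n := by
          apply mul_le_mul_of_nonneg_right (eDivFact_le n) (by positivity)
      _ = |z|^n := one_mul _
  have hsu : Summable fun n : ℕ => ‖uCoeff n * z^n‖ := by
    apply Summable.of_nonneg_of_le (fun n => norm_nonneg _)
      (fun n => ?_) (summable_geometric_of_lt_one (abs_nonneg z) habs)
    rw [norm_mul, norm_pow, Real.norm_eq_abs, Real.norm_eq_abs]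
    calc |uCoeff n| * |z|^n ≤ 1 * |z|^n := by
          apply mul_le_mul_of_nonneg_right (uCoeff_abs n) (by positivity)
      _ = |z|^n := one_mul _
  have hmul := tsum_mul_tsum_eq_tsum_sum_antidiagonal_of_summable_norm hsf hsu
  have hδ : (fun n : ℕ => ∑ kl ∈ Finset.HasAntidiagonal.antidiagonal n,
        ((eSeq kl.1 : ℝ)/kl.1.factorial * z^kl.1) * (uCoeff kl.2 * z^kl.2))
      = fun n : ℕ => if n = 0 then (1:ℝ) else 0 := by
    funext n
    have hx : ∀ kl ∈ Finset.HasAntidiagonal.antidiagonal n,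
        ((eSeq kl.1 : ℝ)/kl.1.factorial * z^kl.1) * (uCoeff kl.2 * z^kl.2)
          = ((eSeq kl.1 : ℝ)/kl.1.factorial * uCoeff kl.2) * z^n := by
      intro kl hkl
      rw [← Finset.HasAntidiagonal.mem_antidiagonal.mp hkl, pow_add]
      ring
    rw [Finset.sum_congr rfl hx, ← Finset.sum_mul, coeff_extract n]
    by_cases h : n = 0 <;> simp [h]
  rw [hδ] at hmul
  have htsumδ : (∑' n : ℕ, if n = 0 then (1:ℝ) else 0) = 1 := (hasSum_ite_eq 0 1).tsum_eq
  rw [htsumδ, (hasSum_uSeries (z := z)).tsum_eq] at hmul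
  have hsin1 : Real.sin z < 1 := by
    rcases le_or_gt z 0 with hz0 | hz0
    · have hpi : -Real.pi ≤ z := by
        have := Real.pi_gt_three
        have := abs_lt.mp habs
        linarith
      have := Real.sin_nonpos_of_nonpos_of_neg_pi_le hz0 hpi
      linarith
    · have h1 := Real.sin_lt hz0
      have := abs_lt.mp habs
      linarith
  have hne : (1 : ℝ) - Real.sin z ≠ 0 := by linarith
  have hA : (∑' n : ℕ, (eSeq n : ℝ)/n.factorial * z^n) = 1/(1 - Real.sin z) := by
    rw [eq_div_iff hne]
    exact hmul
  have hfin : HasSum (fun n : ℕ => (eSeq n : ℝ)/n.factorial * z^n) (1/(1 - Real.sin z)) := by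
    rw [← hA]
    exact (hsf.of_norm).hasSum
  have hfn : (fun n : ℕ =>
      (Nat.card {t : TShelf // TShelf.IsShelf n t ∧ t.avoidsLL = true} : ℝ) *
        z ^ n / (Nat.factorial n : ℝ))
      = fun n : ℕ => (eSeq n : ℝ)/n.factorial * z^n := by
    funext n
    rw [hcard n]
    ring
  rw [hfn]
  exact hfin
end

section
/- For every n ≥ 1, there is a bijection between the set of partitions of the set {1,2,…,n} and the set of treeshelves of size n avoiding the pattern (left child having a right child). -/
namespace ShelfAux

open TShelf List

/-! ### Encoding lists into trees -/

def chain : List ℕ → TShelf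
  | [] => .leaf
  | a :: s => .node a (chain s) .leaf

def spine : List (ℕ × List ℕ) → TShelf
  | [] => .leaf
  | (a, s) :: rest => .node a (chain s) (spine rest)

def chainList : TShelf → List ℕ
  | .leaf => []
  | .node a l _ => a :: chainList l

def spineList : TShelf → List (ℕ × List ℕ)
  | .leaf => []
  | .node a l r => (a, chainList l) :: spineList r

def flat (L : List (ℕ × List ℕ)) : List ℕ := L.flatMap fun p => p.1 :: p.2

def block (p : ℕ × List ℕ) : Finset ℕ := (p.1 :: p.2).toFinset

@[simp] lemma chainList_chain (s : List ℕ) : chainList (chain s) = s := by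
  induction s with
  | nil => rfl
  | cons a s ih => simp [chain, chainList, ih]

@[simp] lemma spineList_spine (L : List (ℕ × List ℕ)) : spineList (spine L) = L := by
  induction L with
  | nil => rfl
  | cons p L ih => cases p; simp [spine, spineList, ih]

/-- trees that are pure left chains -/
def isChain : TShelf → Prop
  | .leaf => True
  | .node _ l r => r = .leaf ∧ isChain l

lemma isChain_of_avoids : ∀ t : TShelf, t.avoidsLR = true → t.right = .leaf → isChain t
  | .leaf, _, _ => trivial
  | .node a l r, h, hr => by
    simp only [TShelf.right] at hr
    subst hr
    simp only [TShelf.avoidsLR, Bool.and_eq_true, Bool.not_eq_true'] at h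
    refine ⟨rfl, isChain_of_avoids l h.1.2 ?_⟩
    rcases l with _ | ⟨b, l1, l2⟩
    · rfl
    · have hll := h.1.1
      rcases l2 with _ | _
      · rfl
      · simp [TShelf.isNode, TShelf.right] at hll

lemma chain_chainList : ∀ t : TShelf, isChain t → chain (chainList t) = t
  | .leaf, _ => rfl
  | .node a l r, h => by
    obtain ⟨hr, hl⟩ := h
    subst hr
    simp [chainList, chain, chain_chainList l hl]

lemma spine_spineList : ∀ t : TShelf, t.avoidsLR = true → spine (spineList t) = t
  | .leaf, _ => rfl
  | .node a l r, h => by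
    simp only [TShelf.avoidsLR, Bool.and_eq_true, Bool.not_eq_true'] at h
    have hl : isChain l := by
      apply isChain_of_avoids l h.1.2
      rcases l with _ | ⟨b, l1, l2⟩
      · rfl
      · have hll := h.1.1
        rcases l2 with _ | _
        · rfl
        · simp [TShelf.isNode, TShelf.right] at hll
    simp [spineList, spine, chain_chainList l hl, spine_spineList r h.2]

@[simp] lemma avoidsLR_chain (s : List ℕ) : (chain s).avoidsLR = true := by
  induction s with
  | nil => rfl
  | cons a s ih =>
    rcases s with _ | ⟨b, s⟩ <;>
      simp_all [chain, TShelf.avoidsLR, TShelf.isNode, TShelf.right]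

@[simp] lemma right_chain (s : List ℕ) : (chain s).right = .leaf := by
  cases s <;> rfl

@[simp] lemma avoidsLR_spine (L : List (ℕ × List ℕ)) : (spine L).avoidsLR = true := by
  induction L with
  | nil => rfl
  | cons p L ih =>
    cases p with
    | mk a s =>
      have h1 := avoidsLR_chain s
      have h2 := right_chain s
      simp only [spine, TShelf.avoidsLR, Bool.and_eq_true, Bool.not_eq_true']
      refine ⟨⟨?_, h1⟩, ih⟩
      rw [h2]
      simp [TShelf.isNode]

@[simp] lemma labels_chain (s : List ℕ) : (chain s).labels = (s : Multiset ℕ) := by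
  induction s with
  | nil => rfl
  | cons a s ih => simp [chain, TShelf.labels, ih]

@[simp] lemma labels_spine (L : List (ℕ × List ℕ)) :
    (spine L).labels = (flat L : Multiset ℕ) := by
  induction L with
  | nil => rfl
  | cons p L ih =>
    cases p with
    | mk a s =>
      simp only [spine, TShelf.labels, ih, flat, List.flatMap_cons]
      simp [add_comm, Multiset.cons_add]

@[simp] lemma rootLabel_chain (a : ℕ) (s : List ℕ) : (chain (a :: s)).rootLabel = a := rfl

lemma increasing_chain (s : List ℕ) : (chain s).increasing = true ↔ s.IsChain (· < ·) := by
  induction s with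
  | nil => simp [chain, TShelf.increasing]
  | cons a s ih =>
    rcases s with _ | ⟨b, s⟩
    · simp [chain, TShelf.increasing, TShelf.isNode]
    · simp only [chain, TShelf.increasing, TShelf.isNode, TShelf.rootLabel,
        Bool.and_eq_true, List.isChain_cons_cons] at *
      constructor
      · rintro ⟨⟨⟨h1, -⟩, h2⟩, -⟩
        exact ⟨of_decide_eq_true h1, ih.1 (by simpa [chain, TShelf.increasing] using h2)⟩
      · rintro ⟨h1, h2⟩
        have := ih.2 h2
        simp_all [chain, TShelf.increasing]

/-- the combinatorial data corresponding to an increasing shelf -/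
def R (L : List (ℕ × List ℕ)) : Prop :=
  (∀ p ∈ L, (p.1 :: p.2).IsChain (· < ·)) ∧ (L.map Prod.fst).IsChain (· < ·)

lemma increasing_spine (L : List (ℕ × List ℕ)) :
    (spine L).increasing = true ↔ R L := by
  induction L with
  | nil => simp [spine, TShelf.increasing, R]
  | cons p L ih =>
    cases p with
    | mk a s =>
      have hchain : ∀ u : List ℕ, (chain u).isNode = true ↔ u ≠ [] := by
        intro u; cases u <;> simp [chain, TShelf.isNode]
      have hspine : ∀ M : List (ℕ × List ℕ), (spine M).isNode = true ↔ M ≠ [] := by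
        intro M; rcases M with _ | ⟨⟨b, u⟩, M⟩ <;> simp [spine, TShelf.isNode]
      constructor
      · intro h
        simp only [spine, TShelf.increasing, Bool.and_eq_true, Bool.or_eq_true,
          Bool.not_eq_true', decide_eq_true_eq] at h
        obtain ⟨⟨⟨h1, h2⟩, h3⟩, h4⟩ := h
        have hR := ih.1 h4
        constructor
        · intro q hq
          simp only [List.mem_cons] at hq
          rcases hq with hq | hq
          · subst hq
            rcases s with _ | ⟨b, u⟩
            · simp
            · have hb : a < b := by
                rcases h1 with h1 | h1
                · simp [chain, TShelf.isNode] at h1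
                · simpa using h1
              have := (increasing_chain _).1 h3
              exact List.isChain_cons_cons.2 ⟨hb, this⟩
          · exact hR.1 q hq
        · simp only [List.map_cons]
          rcases L with _ | ⟨⟨b, u⟩, M⟩
          · simp
          · have hb : a < b := by
              rcases h2 with h2 | h2
              · simp [spine, TShelf.isNode] at h2
              · simpa [spine, TShelf.rootLabel] using h2
            exact List.isChain_cons_cons.2 ⟨hb, hR.2⟩
      · rintro ⟨hb, hh⟩
        have hR : R L := ⟨fun q hq => hb q (by simp [hq]), (List.isChain_cons.1 (by simpa using hh)).2⟩
        simp only [spine, TShelf.increasing, Bool.and_eq_true, Bool.or_eq_true,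
          Bool.not_eq_true', decide_eq_true_eq]
        refine ⟨⟨⟨?_, ?_⟩, ?_⟩, ih.2 hR⟩
        · rcases s with _ | ⟨b, u⟩
          · left; simp [chain, TShelf.isNode]
          · right
            have := hb (a, b :: u) (by simp)
            simpa using (List.isChain_cons_cons.1 this).1
        · rcases L with _ | ⟨⟨b, u⟩, M⟩
          · left; simp [spine, TShelf.isNode]
          · right
            simp only [List.map_cons] at hh
            simpa [spine, TShelf.rootLabel] using (List.isChain_cons_cons.1 hh).1
        · apply (increasing_chain s).2
          have := hb (a, s) (by simp)
          exact (List.isChain_cons.1 this).2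

end ShelfAux


namespace ShelfAux

open TShelf List

/-- pairwise version of `R` -/
def Rp (L : List (ℕ × List ℕ)) : Prop :=
  (∀ p ∈ L, (p.1 :: p.2).Pairwise (· < ·)) ∧ (L.map Prod.fst).Pairwise (· < ·)

lemma R_iff_Rp (L : List (ℕ × List ℕ)) : R L ↔ Rp L := by
  unfold R Rp
  constructor
  · rintro ⟨h1, h2⟩
    exact ⟨fun p hp => List.isChain_iff_pairwise.1 (h1 p hp), List.isChain_iff_pairwise.1 h2⟩
  · rintro ⟨h1, h2⟩
    exact ⟨fun p hp => List.isChain_iff_pairwise.2 (h1 p hp), List.isChain_iff_pairwise.2 h2⟩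

lemma mem_block {x : ℕ} {p : ℕ × List ℕ} : x ∈ block p ↔ x = p.1 ∨ x ∈ p.2 := by
  simp [block]

lemma le_of_mem_block {x : ℕ} {p : ℕ × List ℕ} (hp : (p.1 :: p.2).Pairwise (· < ·))
    (hx : x ∈ block p) : p.1 ≤ x := by
  rcases mem_block.1 hx with h | h
  · exact h.ge
  · exact (List.rel_of_pairwise_cons hp h).le

lemma head_le_of_mem {q : ℕ × List ℕ} {t2 : List (ℕ × List ℕ)}
    (h2 : ∀ p ∈ q :: t2, (p.1 :: p.2).Pairwise (· < ·))
    (h2' : ((q :: t2).map Prod.fst).Pairwise (· < ·))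
    {B : Finset ℕ} (hB : B ∈ (q :: t2).map block) {x : ℕ} (hx : x ∈ B) : q.1 ≤ x := by
  obtain ⟨r, hr, hrB⟩ := List.mem_map.1 hB
  subst hrB
  have hrx : r.1 ≤ x := le_of_mem_block (h2 r hr) hx
  rcases List.mem_cons.1 hr with h | h
  · subst h; exact hrx
  · have : q.1 < r.1 := by
      have := List.rel_of_pairwise_cons (by simpa using h2') (List.mem_map_of_mem (f := Prod.fst) h)
      simpa using this
    exact (this.le).trans hrx

lemma canon : ∀ (L1 L2 : List (ℕ × List ℕ)),
    (∀ p ∈ L1, (p.1 :: p.2).Pairwise (· < ·)) → (L1.map Prod.fst).Pairwise (· < ·) →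
    (∀ p ∈ L2, (p.1 :: p.2).Pairwise (· < ·)) → (L2.map Prod.fst).Pairwise (· < ·) →
    (L1.map block).toFinset = (L2.map block).toFinset → L1 = L2
  | [], [], _, _, _, _, _ => rfl
  | [], q :: t2, _, _, _, _, h => by
      exfalso
      have : block q ∈ ((q :: t2).map block).toFinset := by simp
      rw [← h] at this; simp at this
  | p :: t1, [], _, _, _, _, h => by
      exfalso
      have : block p ∈ ((p :: t1).map block).toFinset := by simp
      rw [h] at this; simp at this
  | p :: t1, q :: t2, h1, h1', h2, h2', h => by
      have hmem : ∀ B : Finset ℕ, B ∈ (p :: t1).map block ↔ B ∈ (q :: t2).map block := by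
        intro B
        rw [← List.mem_toFinset, ← List.mem_toFinset, h]
      -- the heads agree
      have hpq1 : p.1 = q.1 := by
        have hqp : q.1 ≤ p.1 :=
          head_le_of_mem h2 h2' ((hmem (block p)).1 (by simp)) (mem_block.2 (Or.inl rfl))
        have hpq : p.1 ≤ q.1 :=
          head_le_of_mem h1 h1' ((hmem (block q)).2 (by simp)) (mem_block.2 (Or.inl rfl))
        exact le_antisymm hpq hqp
      -- the head blocks agree
      have hbpq : block p = block q := by
        have := (hmem (block p)).1 (by simp)
        obtain ⟨r, hr, hrB⟩ := List.mem_map.1 this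
        rcases List.mem_cons.1 hr with h' | h'
        · rw [← hrB, h']
        · exfalso
          have hx : p.1 ∈ block r := hrB.symm ▸ mem_block.2 (Or.inl rfl)
          have h3 : r.1 ≤ p.1 := le_of_mem_block (h2 r hr) hx
          have h4 : q.1 < r.1 := by
            have := List.rel_of_pairwise_cons (by simpa using h2')
              (List.mem_map_of_mem (f := Prod.fst) h')
            simpa using this
          omega
      -- hence the head pairs agree
      have hpq : p = q := by
        have hnd1 : (p.1 :: p.2).Nodup := (h1 p (by simp)).imp ne_of_lt
        have hnd2 : (q.1 :: q.2).Nodup := (h2 q (by simp)).imp ne_of_lt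
        have hperm := List.perm_of_nodup_nodup_toFinset_eq hnd1 hnd2 hbpq
        have heq : p.1 :: p.2 = q.1 :: q.2 :=
          List.Perm.eq_of_pairwise' ((h1 p (by simp)).imp le_of_lt)
            ((h2 q (by simp)).imp le_of_lt) hperm
        have := List.cons.injEq .. ▸ heq
        exact Prod.ext (by injection heq) (by injection heq)
      subst hpq
      -- the head block occurs in neither tail
      have hnotin : ∀ (t : List (ℕ × List ℕ)), ((p :: t).map Prod.fst).Pairwise (· < ·) →
          (∀ r ∈ p :: t, (r.1 :: r.2).Pairwise (· < ·)) → block p ∉ t.map block := by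
        intro t ht' ht hmem'
        obtain ⟨r, hr, hrB⟩ := List.mem_map.1 hmem'
        have hx : p.1 ∈ block r := hrB ▸ mem_block.2 (Or.inl rfl)
        have h3 : r.1 ≤ p.1 := le_of_mem_block (ht r (by simp [hr])) hx
        have h4 : p.1 < r.1 := by
          have := List.rel_of_pairwise_cons (by simpa using ht')
            (List.mem_map_of_mem (f := Prod.fst) hr)
          simpa using this
        omega
      -- the tails' block sets agree
      have htails : (t1.map block).toFinset = (t2.map block).toFinset := by
        ext B
        simp only [List.mem_toFinset]
        constructor
        · intro hB
          have := (hmem B).1 (by simp [hB])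
          rcases List.mem_cons.1 this with h' | h'
          · exact absurd (h' ▸ hB) (hnotin t1 h1' h1)
          · exact h'
        · intro hB
          have := (hmem B).2 (by simp [hB])
          rcases List.mem_cons.1 this with h' | h'
          · exact absurd (h' ▸ hB) (hnotin t2 h2' h2)
          · exact h'
      have := canon t1 t2 (fun r hr => h1 r (by simp [hr])) (List.Pairwise.of_cons (by simpa using h1'))
        (fun r hr => h2 r (by simp [hr])) (List.Pairwise.of_cons (by simpa using h2')) htails
      rw [this]

end ShelfAux


namespace ShelfAux

open TShelf List

variable {n : ℕ}

def keys (n : ℕ) (P : Finpartition (Finset.Icc 1 n)) : List ℕ :=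
  ((Finset.Icc 1 n).sort (· ≤ ·)).filter fun m => @decide ((P.part m).min = some m) (Option.instDecidableEq _ _)

def listOf (n : ℕ) (P : Finpartition (Finset.Icc 1 n)) : List (ℕ × List ℕ) :=
  (keys n P).map fun m => (m, ((P.part m).erase m).sort (· ≤ ·))

lemma mem_keys {P : Finpartition (Finset.Icc 1 n)} {m : ℕ} :
    m ∈ keys n P ↔ m ∈ Finset.Icc 1 n ∧ (P.part m).min = some m := by
  simp [keys, Finset.mem_sort]
  exact fun _ _ => @decide_eq_true_iff _ (Option.instDecidableEq _ _)

lemma keys_pairwise (P : Finpartition (Finset.Icc 1 n)) : (keys n P).Pairwise (· < ·) :=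
  (Finset.sortedLT_sort _).pairwise.sublist List.filter_sublist

lemma block_listOf {P : Finpartition (Finset.Icc 1 n)} {m : ℕ} (hm : m ∈ keys n P) :
    block (m, ((P.part m).erase m).sort (· ≤ ·)) = P.part m := by
  obtain ⟨hmI, hmin⟩ := mem_keys.1 hm
  have hmp : m ∈ P.part m := P.mem_part hmI
  simp only [block, List.toFinset_cons, Finset.sort_toFinset]
  exact Finset.insert_erase hmp

lemma pairwise_block_listOf {P : Finpartition (Finset.Icc 1 n)} {m : ℕ} (hm : m ∈ keys n P) :
    (m :: ((P.part m).erase m).sort (· ≤ ·)).Pairwise (· < ·) := by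
  obtain ⟨hmI, hmin⟩ := mem_keys.1 hm
  refine List.pairwise_cons.2 ⟨?_, (Finset.sortedLT_sort _).pairwise⟩
  intro x hx
  rw [Finset.mem_sort] at hx
  have hx' : x ∈ P.part m := Finset.mem_of_mem_erase hx
  have hne : x ≠ m := Finset.ne_of_mem_erase hx
  have := Finset.min_le_of_eq hx' hmin
  omega

lemma Rp_listOf (P : Finpartition (Finset.Icc 1 n)) : Rp (listOf n P) := by
  constructor
  · intro p hp
    obtain ⟨m, hm, rfl⟩ := List.mem_map.1 hp
    exact pairwise_block_listOf hm
  · have h : (listOf n P).map Prod.fst = keys n P := by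
      rw [listOf, List.map_map]
      rw [show (Prod.fst ∘ fun m : ℕ => (m, Finset.sort ((P.part m).erase m) (· ≤ ·))) = id
        from rfl, List.map_id]
    rw [h]; exact keys_pairwise P

lemma exists_key {P : Finpartition (Finset.Icc 1 n)} {B : Finset ℕ} (hB : B ∈ P.parts) :
    ∃ m ∈ keys n P, P.part m = B := by
  have hne : B.Nonempty := P.nonempty_of_mem_parts hB
  have hmB : B.min' hne ∈ B := B.min'_mem hne
  have hmI : B.min' hne ∈ Finset.Icc 1 n := P.le hB hmB
  have hpart : P.part (B.min' hne) = B := P.part_eq_of_mem hB hmB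
  refine ⟨B.min' hne, mem_keys.2 ⟨hmI, ?_⟩, hpart⟩
  rw [hpart, ← Finset.coe_min' hne]
  rfl

lemma blocks_listOf (P : Finpartition (Finset.Icc 1 n)) :
    ((listOf n P).map block).toFinset = P.parts := by
  ext B
  simp only [List.mem_toFinset, List.mem_map, listOf]
  constructor
  · rintro ⟨p, ⟨m, hm, rfl⟩, rfl⟩
    rw [block_listOf hm]
    exact P.part_mem.2 (mem_keys.1 hm).1
  · intro hB
    obtain ⟨m, hm, hpart⟩ := exists_key hB
    exact ⟨(m, ((P.part m).erase m).sort (· ≤ ·)), ⟨m, hm, rfl⟩,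
      by rw [block_listOf hm, hpart]⟩

lemma flat_map_coe (l : List ℕ) (f : ℕ → ℕ × List ℕ) :
    (flat (l.map f) : Multiset ℕ) =
      (l.map fun m => ((f m).1 ::ₘ (((f m).2 : List ℕ) : Multiset ℕ))).sum := by
  induction l with
  | nil => rfl
  | cons a l ih =>
    simp only [List.map_cons, flat, List.flatMap_cons, List.map_cons, List.sum_cons, ← ih]
    simp [flat]

lemma sum_parts_val (P : Finpartition (Finset.Icc 1 n)) :
    ∑ B ∈ P.parts, B.val = (Finset.Icc 1 n).val := by
  have hpd : (P.parts : Set (Finset ℕ)).PairwiseDisjoint id :=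
    Finset.supIndep_iff_pairwiseDisjoint.1 P.supIndep
  have h := P.biUnion_parts
  rw [← Finset.disjiUnion_eq_biUnion _ _ hpd] at h
  conv_rhs => rw [← h]
  rw [Finset.disjiUnion_val]
  rw [Finset.sum]
  rw [Multiset.bind, Multiset.join]
  rfl

lemma flat_listOf (P : Finpartition (Finset.Icc 1 n)) :
    (flat (listOf n P) : Multiset ℕ) = (Finset.Icc 1 n).val := by
  rw [listOf, flat_map_coe]
  have h1 : ((keys n P).map fun m =>
      (m ::ₘ ((((P.part m).erase m).sort (· ≤ ·) : List ℕ) : Multiset ℕ))) =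
      (keys n P).map fun m => (P.part m).val := by
    apply List.map_congr_left
    intro m hm
    obtain ⟨hmI, hmin⟩ := mem_keys.1 hm
    rw [Finset.sort_eq, Finset.erase_val]
    exact Multiset.cons_erase (by exact_mod_cast P.mem_part hmI)
  rw [h1]
  have hnd : (keys n P).Nodup := (keys_pairwise P).imp ne_of_lt
  rw [← List.sum_toFinset _ hnd]
  rw [Finset.sum_bij (i := fun m (_ : m ∈ (keys n P).toFinset) => P.part m)
    (t := P.parts) (g := fun B => B.val)]
  · exact sum_parts_val P
  · intro m hm
    exact P.part_mem.2 (mem_keys.1 (List.mem_toFinset.1 hm)).1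
  · intro m1 h1' m2 h2' he
    have k1 := (mem_keys.1 (List.mem_toFinset.1 h1')).2
    have k2 := (mem_keys.1 (List.mem_toFinset.1 h2')).2
    rw [he] at k1
    rw [k1] at k2
    exact Option.some.inj k2
  · intro B hB
    obtain ⟨m, hm, hpart⟩ := exists_key hB
    exact ⟨m, List.mem_toFinset.2 hm, hpart⟩
  · intro m hm
    rfl

end ShelfAux


namespace ShelfAux

open TShelf List

variable {n : ℕ}

lemma pairwise_disjoint_blocks (L : List (ℕ × List ℕ)) (h : (flat L).Nodup) :
    (L.map block).Pairwise (fun A B => _root_.Disjoint A B) := by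
  induction L with
  | nil => simp
  | cons p L ih =>
    have h' : ((p.1 :: p.2) ++ flat L).Nodup := by simpa [flat] using h
    obtain ⟨h1, h2, hdis⟩ := List.nodup_append.1 h'
    refine List.pairwise_cons.2 ⟨?_, ih h2⟩
    intro B hB
    obtain ⟨q, hq, rfl⟩ := List.mem_map.1 hB
    rw [Finset.disjoint_left]
    intro x hxp hxq
    have hx1 : x ∈ p.1 :: p.2 := by simpa [block] using hxp
    have hx2 : x ∈ flat L := List.mem_flatMap.2 ⟨q, hq, by simpa [block] using hxq⟩
    exact hdis x hx1 x hx2 rfl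

lemma mem_flat {L : List (ℕ × List ℕ)} {x : ℕ} :
    x ∈ flat L ↔ ∃ p ∈ L, x ∈ block p := by
  simp [flat, List.mem_flatMap, block]

/-- Build a finpartition out of a list of blocks whose concatenation is `{1, …, n}`. -/
def partOf (n : ℕ) (L : List (ℕ × List ℕ))
    (hflat : (flat L : Multiset ℕ) = (Finset.Icc 1 n).val) : Finpartition (Finset.Icc 1 n) where
  parts := (L.map block).toFinset
  supIndep := by
    apply Finset.supIndep_iff_pairwiseDisjoint.2
    have hnd : (flat L).Nodup := by
      have := (Finset.Icc 1 n).nodup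
      rw [← hflat] at this
      exact this
    have hpw := pairwise_disjoint_blocks L hnd
    intro A hA B hB hne
    have hA' : A ∈ L.map block := List.mem_toFinset.1 hA
    have hB' : B ∈ L.map block := List.mem_toFinset.1 hB
    haveI : Std.Symm (fun A B : Finset ℕ => _root_.Disjoint A B) := ⟨fun _ _ h => h.symm⟩
    exact hpw.forall hA' hB' hne
  sup_parts := by
    ext x
    rw [Finset.mem_sup]
    constructor
    · rintro ⟨B, hB, hx⟩
      obtain ⟨p, hp, rfl⟩ := List.mem_map.1 (List.mem_toFinset.1 hB)
      have : x ∈ flat L := mem_flat.2 ⟨p, hp, hx⟩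
      have : x ∈ (flat L : Multiset ℕ) := by exact_mod_cast this
      rw [hflat] at this
      exact this
    · intro hx
      have : x ∈ (flat L : Multiset ℕ) := by rw [hflat]; exact hx
      have : x ∈ flat L := by exact_mod_cast this
      obtain ⟨p, hp, hx'⟩ := mem_flat.1 this
      exact ⟨block p, List.mem_toFinset.2 (List.mem_map_of_mem (f := block) hp), hx'⟩
  bot_notMem := by
    intro hbot
    obtain ⟨p, hp, hB⟩ := List.mem_map.1 (List.mem_toFinset.1 hbot)
    have : p.1 ∈ block p := mem_block.2 (Or.inl rfl)
    rw [hB] at this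
    simp at this

lemma parts_partOf (n : ℕ) (L : List (ℕ × List ℕ)) (hflat) :
    (partOf n L hflat).parts = (L.map block).toFinset := rfl

/-- From a partition to an avoiding shelf. -/
def F (n : ℕ) (P : Finpartition (Finset.Icc 1 n)) :
    {t : TShelf // TShelf.IsShelf n t ∧ t.avoidsLR = true} :=
  ⟨spine (listOf n P),
    ⟨⟨by rw [labels_spine]; exact flat_listOf P,
      (increasing_spine _).2 ((R_iff_Rp _).2 (Rp_listOf P))⟩, avoidsLR_spine _⟩⟩

lemma flat_spineList {t : TShelf} (h : TShelf.IsShelf n t ∧ t.avoidsLR = true) :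
    (flat (spineList t) : Multiset ℕ) = (Finset.Icc 1 n).val := by
  have hs : spine (spineList t) = t := spine_spineList t h.2
  calc (flat (spineList t) : Multiset ℕ) = (spine (spineList t)).labels :=
        (labels_spine _).symm
    _ = t.labels := by rw [hs]
    _ = (Finset.Icc 1 n).val := h.1.1

/-- From an avoiding shelf to a partition. -/
def G (n : ℕ) (t : {t : TShelf // TShelf.IsShelf n t ∧ t.avoidsLR = true}) :
    Finpartition (Finset.Icc 1 n) :=
  partOf n (spineList t.1) (flat_spineList t.2)

lemma Rp_spineList {t : TShelf} (h : TShelf.IsShelf n t ∧ t.avoidsLR = true) :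
    Rp (spineList t) := by
  apply (R_iff_Rp _).1
  apply (increasing_spine _).1
  rw [spine_spineList t h.2]
  exact h.1.2

lemma left_inv (n : ℕ) (P : Finpartition (Finset.Icc 1 n)) : G n (F n P) = P := by
  apply Finpartition.ext
  show (partOf n _ _).parts = P.parts
  rw [parts_partOf]
  rw [show spineList (F n P).1 = listOf n P from spineList_spine _]
  exact blocks_listOf P

lemma right_inv (n : ℕ) (t : {t : TShelf // TShelf.IsShelf n t ∧ t.avoidsLR = true}) :
    F n (G n t) = t := by
  have hRp1 := Rp_listOf (G n t)
  have hRp2 := Rp_spineList t.2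
  have hblocks : ((listOf n (G n t)).map block).toFinset =
      (((spineList t.1)).map block).toFinset := by
    rw [blocks_listOf (G n t)]
    rfl
  have hL : listOf n (G n t) = spineList t.1 :=
    canon _ _ hRp1.1 hRp1.2 hRp2.1 hRp2.2 hblocks
  apply Subtype.ext
  show spine (listOf n (G n t)) = t.1
  rw [hL, spine_spineList t.1 t.2.2]

end ShelfAux


/-- bijection between set partitions of `{1,…,n}` and treeshelves
of size `n` avoiding "left child having a right child". -/
theorem stmt16 (n : ℕ) (hn : 1 ≤ n) :
    Nonempty (Finpartition (Finset.Icc 1 n) ≃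
      {t : TShelf // TShelf.IsShelf n t ∧ t.avoidsLR = true}) :=
  ⟨{ toFun := ShelfAux.F n
     invFun := ShelfAux.G n
     left_inv := ShelfAux.left_inv n
     right_inv := ShelfAux.right_inv n }⟩
end
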